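/- arXiv:2307.13257 — 6 statements merged into one kernel-verified Lean document; each statement's English description precedes it below -/
import Mathlib

section
/- For every integer j ≥ 0, the minimum total weight of a fractional line cover of T_2(3j+3) equals 2j + 2 + (j+1)/(3j+4). -/
open scoped Classical

/-- The triangular grid `T_d(n)`. -/
def TriGrid (d n : ℕ) : Set (Fin d → ℤ) :=
  {x | (∀ i, 0 ≤ x i) ∧ (∑ i, x i) ≤ (n : ℤ) - 1}

/-- Cast an integer point to a real point. -/
def toReal {d : ℕ} (x : Fin d → ℤ) : Fin d → ℝ := fun i => (x i : ℝ)

/-- Number of hyperplanes (with multiplicity) of the multiset `C` passing through `p`.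
A hyperplane is encoded as a pair `(a, b)` with `a ≠ 0`, representing `{p | ∑ i, a i * p i = b}`. -/
noncomputable def hypCount (d : ℕ) (C : Multiset ((Fin d → ℝ) × ℝ)) (p : Fin d → ℝ) : ℕ :=
  Multiset.countP (fun H => ∑ i, H.1 i * p i = H.2) C

/-- The total weight of a finitely-supported weight assignment on hyperplanes. -/
noncomputable def fracTotal {d : ℕ} (w : ((Fin d → ℝ) × ℝ) →₀ ℝ) : ℝ :=
  ∑ H ∈ w.support, w H

/-- The total weight of hyperplanes passing through the point `p`. -/
noncomputable def fracAt {d : ℕ} (w : ((Fin d → ℝ) × ℝ) →₀ ℝ) (p : Fin d → ℝ) : ℝ :=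
  ∑ H ∈ w.support.filter (fun H => ∑ i, H.1 i * p i = H.2), w H

/-- `w` is a fractional cover of `T_d(n)`: nonnegative weights on genuine hyperplanes such that
every grid point lies on hyperplanes of total weight at least `1`. -/
def IsFracCover (d n : ℕ) (w : ((Fin d → ℝ) × ℝ) →₀ ℝ) : Prop :=
  (∀ H, 0 ≤ w H) ∧ (∀ H ∈ w.support, H.1 ≠ 0) ∧
  ∀ x ∈ TriGrid d n, 1 ≤ fracAt w (toReal x)

namespace FracCov

def Gh (j : ℕ) (t : ℤ) : ℤ :=
  if 0 ≤ t ∧ t ≤ (j:ℤ) then ((j:ℤ)+1)*(3*j+2-3*t)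
  else if (j:ℤ)+1 ≤ t ∧ t ≤ 2*j+1 then (2*(j:ℤ)+3)*(3*t-3*j-2)
  else 0

def SG2 (j : ℕ) (x : ℤ) : ℤ :=
  if x < 0 then 0
  else if x ≤ (j:ℤ) then ((j:ℤ)+1)*(x+1)*(6*j+4-3*x)
  else if x ≤ 2*(j:ℤ)+1 then ((j:ℤ)+1)*((j:ℤ)+1)*(3*j+4) + (2*(j:ℤ)+3)*(x-j)*(3*(x-j)-1)
  else ((j:ℤ)+1)*((j:ℤ)+1)*(3*j+4) + (2*(j:ℤ)+3)*((j:ℤ)+1)*(3*j+2)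

lemma Gh_nonneg (j : ℕ) (t : ℤ) : 0 ≤ Gh j t := by
  unfold Gh; split_ifs with h1 h2
  · nlinarith [h1.1, h1.2]
  · nlinarith [h2.1, h2.2]
  · exact le_refl 0

lemma Gh_low (j : ℕ) {t : ℤ} (h0 : 0 ≤ t) (h1 : t ≤ (j:ℤ)) :
    Gh j t = ((j:ℤ)+1)*(3*j+2-3*t) := by unfold Gh; rw [if_pos ⟨h0, h1⟩]

lemma Gh_mid (j : ℕ) {t : ℤ} (h0 : (j:ℤ)+1 ≤ t) (h1 : t ≤ 2*(j:ℤ)+1) :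
    Gh j t = (2*(j:ℤ)+3)*(3*t-3*j-2) := by
  unfold Gh; rw [if_neg (by omega), if_pos ⟨h0, by omega⟩]

lemma Gh_out (j : ℕ) {t : ℤ} (h : t < 0 ∨ 2*(j:ℤ)+1 < t) : Gh j t = 0 := by
  unfold Gh; rw [if_neg (by omega), if_neg (by omega)]

lemma SG2_step (j : ℕ) (x : ℤ) : SG2 j x - SG2 j (x-1) = 2 * Gh j x := by
  have h : x < 0 ∨ x = 0 ∨ (1 ≤ x ∧ x ≤ (j:ℤ)) ∨ x = (j:ℤ)+1 ∨
      ((j:ℤ)+2 ≤ x ∧ x ≤ 2*(j:ℤ)+1) ∨ x = 2*(j:ℤ)+2 ∨ 2*(j:ℤ)+3 ≤ x := by omega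
  unfold SG2 Gh
  rcases h with h|rfl|⟨h1,h2⟩|rfl|⟨h1,h2⟩|rfl|h <;>
    split_ifs <;> first | omega | ring

/-! ### pointwise bounds -/

lemma core1 (j : ℕ) {a b c : ℤ} (ha0 : 0 ≤ a) (hb0 : 0 ≤ b)
    (ha : a ≤ (j:ℤ)) (hb : b ≤ (j:ℤ)) (hc1 : (j:ℤ)+1 ≤ c) (hc2 : c ≤ 2*(j:ℤ)+2)
    (hsum : a + b + c = 3*(j:ℤ)+2) :
    Gh j a + Gh j b + Gh j c ≤ (3*(j:ℤ)+2)*(3*(j:ℤ)+4) := by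
  rw [Gh_low j ha0 ha, Gh_low j hb0 hb]
  rcases eq_or_lt_of_le hc2 with h | h
  · rw [Gh_out j (Or.inr (by omega))]
    nlinarith
  · rw [Gh_mid j hc1 (by omega)]
    nlinarith

lemma core2 (j : ℕ) {a b c : ℤ} (ha0 : 0 ≤ a) (ha : a ≤ (j:ℤ))
    (hb1 : (j:ℤ)+1 ≤ b) (hc1 : (j:ℤ)+1 ≤ c)
    (hsum : a + b + c = 3*(j:ℤ)+2) :
    Gh j a + Gh j b + Gh j c ≤ (3*(j:ℤ)+2)*(3*(j:ℤ)+4) := by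
  rw [Gh_low j ha0 ha, Gh_mid j hb1 (by omega), Gh_mid j hc1 (by omega)]
  nlinarith

lemma Yh_le (j : ℕ) {a b c : ℤ} (ha0 : 0 ≤ a) (hb0 : 0 ≤ b) (hc0 : 0 ≤ c)
    (ha : a ≤ 2*(j:ℤ)+2) (hb : b ≤ 2*(j:ℤ)+2) (hc : c ≤ 2*(j:ℤ)+2)
    (hsum : a + b + c = 3*(j:ℤ)+2) :
    Gh j a + Gh j b + Gh j c ≤ (3*(j:ℤ)+2)*(3*(j:ℤ)+4) := by
  by_cases h1 : a ≤ (j:ℤ) <;> by_cases h2 : b ≤ (j:ℤ) <;> by_cases h3 : c ≤ (j:ℤ)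
  · omega
  · linarith [core1 j ha0 hb0 h1 h2 (by omega : (j:ℤ)+1 ≤ c) hc (by omega)]
  · linarith [core1 j ha0 hc0 h1 h3 (by omega : (j:ℤ)+1 ≤ b) hb (by omega)]
  · linarith [core2 j ha0 h1 (by omega : (j:ℤ)+1 ≤ b) (by omega : (j:ℤ)+1 ≤ c) (by omega)]
  · linarith [core1 j hb0 hc0 h2 h3 (by omega : (j:ℤ)+1 ≤ a) ha (by omega)]
  · linarith [core2 j hb0 h2 (by omega : (j:ℤ)+1 ≤ a) (by omega : (j:ℤ)+1 ≤ c) (by omega)]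
  · linarith [core2 j hc0 h3 (by omega : (j:ℤ)+1 ≤ a) (by omega : (j:ℤ)+1 ≤ b) (by omega)]
  · omega

lemma Yh_eq_D_core (j : ℕ) {b c : ℤ} (hb0 : 0 ≤ b) (hc0 : 0 ≤ c)
    (hbc : b + c = (j:ℤ)) :
    Gh j (2*(j:ℤ)+2) + Gh j b + Gh j c ≤ ((j:ℤ)+1)*(3*(j:ℤ)+4) := by
  rw [Gh_out j (Or.inr (by omega)), Gh_low j hb0 (by omega), Gh_low j hc0 (by omega)]
  nlinarith

/-! ### interval sums -/

lemma Icc_succ_right' (L n : ℤ) (h : L ≤ n + 1) :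
    Finset.Icc L (n+1) = insert (n+1) (Finset.Icc L n) := by
  ext x; simp [Finset.mem_Icc]; omega

lemma sum_Gh_Icc (j : ℕ) (L : ℤ) : ∀ U : ℤ, L - 1 ≤ U →
    2 * ∑ t ∈ Finset.Icc L U, Gh j t = SG2 j U - SG2 j (L-1) := by
  refine Int.le_induction ?_ ?_
  · rw [Finset.Icc_eq_empty (by omega)]; simp
  · intro n hn ih
    rcases eq_or_lt_of_le hn with h | h
    · rw [Finset.Icc_eq_empty (by omega)] at ih
      rw [show n + 1 = L by omega] at *
      rw [Finset.Icc_self, Finset.sum_singleton]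
      have := SG2_step j L
      simp at ih
      linarith
    · rw [Icc_succ_right' L n (by omega), Finset.sum_insert (by simp [Finset.mem_Icc])]
      have := SG2_step j (n+1)
      have h2 : n + 1 - 1 = n := by ring
      rw [h2] at this
      linarith

noncomputable def col (j : ℕ) (a : ℤ) : Finset ℤ :=
  Finset.Icc (max 0 ((j:ℤ) - a)) (min (2*(j:ℤ)+2) (3*(j:ℤ)+2 - a))

lemma sum_Gh_c (j : ℕ) (a : ℤ) :
    ∑ b ∈ col j a, Gh j (3*(j:ℤ)+2 - a - b) = ∑ b ∈ col j a, Gh j b := by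
  apply Finset.sum_nbij' (fun b => 3*(j:ℤ)+2 - a - b) (fun b => 3*(j:ℤ)+2 - a - b) <;>
    simp only [col, Finset.mem_Icc] <;> intros <;> first | omega | trivial

/-- the column sum of `Yh`, doubled, for `0 ≤ a ≤ 2j+1`. -/
lemma colsum_main (j : ℕ) {a : ℤ} (h0 : 0 ≤ a) (h1 : a ≤ 2*(j:ℤ)+1) :
    2 * ∑ b ∈ col j a, (Gh j a + Gh j b + Gh j (3*(j:ℤ)+2 - a - b))
      = 2*((j:ℤ)+1)*(3*(j:ℤ)+4)^2 := by
  rw [Finset.sum_add_distrib, Finset.sum_add_distrib, sum_Gh_c, Finset.sum_const]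
  have hcard : (col j a).card = (min (2*(j:ℤ)+2) (3*(j:ℤ)+2 - a) + 1 - max 0 ((j:ℤ) - a)).toNat := by
    simp [col, Int.card_Icc]
  have hsum := sum_Gh_Icc j (max 0 ((j:ℤ) - a)) (min (2*(j:ℤ)+2) (3*(j:ℤ)+2 - a)) (by omega)
  rcases le_or_gt a (j:ℤ) with hA | hA
  · -- low regime
    have hL : max 0 ((j:ℤ) - a) = (j:ℤ) - a := by omega
    have hU : min (2*(j:ℤ)+2) (3*(j:ℤ)+2 - a) = 2*(j:ℤ)+2 := by omega
    have hGa : Gh j a = ((j:ℤ)+1)*(3*j+2-3*a) := Gh_low j h0 hA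
    have hSU : SG2 j (2*(j:ℤ)+2) = ((j:ℤ)+1)*((j:ℤ)+1)*(3*j+4) + (2*(j:ℤ)+3)*((j:ℤ)+1)*(3*j+2) := by
      unfold SG2; rw [if_neg (by omega), if_neg (by omega), if_neg (by omega)]
    have hSL : SG2 j ((j:ℤ) - a - 1) = ((j:ℤ)+1)*((j:ℤ)-a)*(3*(j:ℤ)+3*a+7) := by
      unfold SG2
      split_ifs with p1 p2
      · have : (j:ℤ) - a = 0 := by omega
        rw [this]; ring
      · ring_nf
      · omega
      · omega
    rw [hL, hU] at hsum
    rw [hSU, hSL] at hsum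
    have hcol : col j a = Finset.Icc ((j:ℤ) - a) (2*(j:ℤ)+2) := by rw [col, hL, hU]
    have hcard' : ((col j a).card : ℤ) = (j:ℤ) + a + 3 := by
      rw [hcard, hL, hU]; omega
    rw [hcol] at hcard' ⊢
    rw [hGa]
    simp only [nsmul_eq_mul]
    rw [hcard']
    linear_combination 2 * hsum
  · -- mid regime
    have hL : max 0 ((j:ℤ) - a) = 0 := by omega
    have hU : min (2*(j:ℤ)+2) (3*(j:ℤ)+2 - a) = 3*(j:ℤ)+2 - a := by omega
    have hGa : Gh j a = (2*(j:ℤ)+3)*(3*a-3*j-2) := Gh_mid j (by omega) h1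
    have hSU : SG2 j (3*(j:ℤ)+2-a) = ((j:ℤ)+1)*((j:ℤ)+1)*(3*j+4)
        + (2*(j:ℤ)+3)*(2*(j:ℤ)+2-a)*(3*(2*(j:ℤ)+2-a)-1) := by
      unfold SG2
      rw [if_neg (by omega), if_neg (by omega), if_pos (by omega)]
      ring
    have hSL : SG2 j (0 - 1) = 0 := by unfold SG2; rw [if_pos (by omega)]
    rw [hL, hU] at hsum
    rw [hSU, hSL] at hsum
    have hcol : col j a = Finset.Icc 0 (3*(j:ℤ)+2-a) := by rw [col, hL, hU]
    have hcard' : ((col j a).card : ℤ) = 3*(j:ℤ) + 3 - a := by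
      rw [hcard, hL, hU]; omega
    rw [hcol] at hcard' ⊢
    rw [hGa]
    simp only [nsmul_eq_mul]
    rw [hcard']
    linear_combination 2 * hsum

lemma colsum_last (j : ℕ) :
    2 * ∑ b ∈ col j (2*(j:ℤ)+2), (Gh j (2*(j:ℤ)+2) + Gh j b + Gh j (3*(j:ℤ)+2 - (2*(j:ℤ)+2) - b))
      = 2*((j:ℤ)+1)^2*(3*(j:ℤ)+4) := by
  rw [Finset.sum_add_distrib, Finset.sum_add_distrib, sum_Gh_c, Finset.sum_const]
  have hGa : Gh j (2*(j:ℤ)+2) = 0 := Gh_out j (by omega)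
  have hL : max 0 ((j:ℤ) - (2*(j:ℤ)+2)) = 0 := by omega
  have hU : min (2*(j:ℤ)+2) (3*(j:ℤ)+2 - (2*(j:ℤ)+2)) = (j:ℤ) := by omega
  have hsum := sum_Gh_Icc j (max 0 ((j:ℤ) - (2*(j:ℤ)+2))) (min (2*(j:ℤ)+2) (3*(j:ℤ)+2 - (2*(j:ℤ)+2))) (by omega)
  have hSU : SG2 j ((j:ℤ)) = ((j:ℤ)+1)*((j:ℤ)+1)*(3*(j:ℤ)+4) := by
    unfold SG2; rw [if_neg (by omega), if_pos (by omega)]; ring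
  have hSL : SG2 j (0 - 1) = 0 := by unfold SG2; rw [if_pos (by omega)]
  rw [hL, hU] at hsum
  rw [hSU, hSL] at hsum
  have hcol : col j (2*(j:ℤ)+2) = Finset.Icc 0 ((j:ℤ)) := by rw [col, hL, hU]
  rw [hGa, hcol]
  simp only [smul_zero]
  linarith [hsum]


abbrev Line (d : ℕ) := (Fin d → ℝ) × ℝ

lemma fracTotal_eq {d : ℕ} (w : Line d →₀ ℝ) : fracTotal w = w.sum (fun _ v => v) := rfl

lemma fracAt_eq {d : ℕ} (w : Line d →₀ ℝ) (p : Fin d → ℝ) :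
    fracAt w p = w.sum (fun H v => if (∑ i, H.1 i * p i = H.2) then v else 0) := by
  rw [fracAt, Finset.sum_filter]; rfl

lemma fracTotal_add {d : ℕ} (w₁ w₂ : Line d →₀ ℝ) :
    fracTotal (w₁ + w₂) = fracTotal w₁ + fracTotal w₂ := by
  simp only [fracTotal_eq]
  exact Finsupp.sum_add_index' (fun _ => rfl) (fun _ _ _ => rfl)

lemma fracAt_add {d : ℕ} (w₁ w₂ : Line d →₀ ℝ) (p : Fin d → ℝ) :
    fracAt (w₁ + w₂) p = fracAt w₁ p + fracAt w₂ p := by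
  simp only [fracAt_eq]
  exact Finsupp.sum_add_index' (fun _ => ite_self 0) (fun H v₁ v₂ => by split_ifs <;> simp)

lemma fracTotal_single {d : ℕ} (k : Line d) (v : ℝ) : fracTotal (Finsupp.single k v) = v := by
  rw [fracTotal_eq]; exact Finsupp.sum_single_index rfl

lemma fracAt_single {d : ℕ} (k : Line d) (v : ℝ) (p : Fin d → ℝ) :
    fracAt (Finsupp.single k v) p = if (∑ i, k.1 i * p i = k.2) then v else 0 := by
  rw [fracAt_eq]; exact Finsupp.sum_single_index (ite_self 0)

noncomputable def totalHom (d : ℕ) : (Line d →₀ ℝ) →+ ℝ :=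
  AddMonoidHom.mk' fracTotal fracTotal_add

noncomputable def atHom (d : ℕ) (p : Fin d → ℝ) : (Line d →₀ ℝ) →+ ℝ :=
  AddMonoidHom.mk' (fun w => fracAt w p) (fun w₁ w₂ => fracAt_add w₁ w₂ p)

lemma fracTotal_sum {d : ℕ} {ι : Type*} (s : Finset ι) (f : ι → (Line d →₀ ℝ)) :
    fracTotal (∑ i ∈ s, f i) = ∑ i ∈ s, fracTotal (f i) :=
  map_sum (totalHom d) f s

lemma fracAt_sum {d : ℕ} {ι : Type*} (s : Finset ι) (f : ι → (Line d →₀ ℝ)) (p : Fin d → ℝ) :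
    fracAt (∑ i ∈ s, f i) p = ∑ i ∈ s, fracAt (f i) p :=
  map_sum (atHom d p) f s

/-! ### the primal construction -/

noncomputable def wt (j : ℕ) (z : ℤ) : ℝ := ((2*(j:ℤ)+2-z : ℤ) : ℝ) / (3*(j:ℝ)+4)

noncomputable def lx (z : ℤ) : Line 2 := (![1,0], (z:ℝ))
noncomputable def ly (z : ℤ) : Line 2 := (![0,1], (z:ℝ))
noncomputable def ld (j : ℕ) (z : ℤ) : Line 2 := (![1,1], ((3*(j:ℤ)+2-z : ℤ):ℝ))

noncomputable def W (j : ℕ) : Line 2 →₀ ℝ :=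
  ∑ z ∈ Finset.Icc (0:ℤ) (2*(j:ℤ)+1),
    (Finsupp.single (lx z) (wt j z) + Finsupp.single (ly z) (wt j z) +
      Finsupp.single (ld j z) (wt j z))

lemma gauss : ∀ U : ℤ, (-1:ℤ) ≤ U → 2 * ∑ z ∈ Finset.Icc (0:ℤ) U, z = U * (U+1) := by
  refine Int.le_induction ?_ ?_
  · rw [Finset.Icc_eq_empty (by omega)]; simp
  · intro n hn ih
    have hins : Finset.Icc (0:ℤ) (n+1) = insert (n+1) (Finset.Icc 0 n) := by
      ext x; simp only [Finset.mem_Icc, Finset.mem_insert]; omega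
    rw [hins, Finset.sum_insert (by simp only [Finset.mem_Icc]; omega)]
    ring_nf
    ring_nf at ih
    linarith

lemma wt_nonneg (j : ℕ) {z : ℤ} (hz : z ∈ Finset.Icc (0:ℤ) (2*(j:ℤ)+1)) : 0 ≤ wt j z := by
  simp only [Finset.mem_Icc] at hz
  unfold wt
  apply div_nonneg
  · exact_mod_cast (by omega : (0:ℤ) ≤ 2*(j:ℤ)+2-z)
  · positivity

lemma W_nonneg (j : ℕ) (H : Line 2) : 0 ≤ W j H := by
  rw [W, Finset.sum_apply']
  apply Finset.sum_nonneg
  intro z hz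
  simp only [Finsupp.add_apply, Finsupp.single_apply]
  have := wt_nonneg j hz
  split_ifs <;> simp <;> linarith

lemma W_support (j : ℕ) : ∀ H ∈ (W j).support, H.1 ≠ 0 := by
  intro H hH h0
  apply Finsupp.mem_support_iff.mp hH
  rw [W, Finset.sum_apply']
  apply Finset.sum_eq_zero
  intro z _
  simp only [Finsupp.add_apply, Finsupp.single_apply]
  have hx : ¬ (lx z = H) := by
    intro h; have := congrFun (congrArg Prod.fst h) 0; rw [h0] at this
    simp [lx] at this
  have hy : ¬ (ly z = H) := by
    intro h; have := congrFun (congrArg Prod.fst h) 1; rw [h0] at this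
    simp [ly] at this
  have hd : ¬ (ld j z = H) := by
    intro h; have := congrFun (congrArg Prod.fst h) 0; rw [h0] at this
    simp [ld] at this
  rw [if_neg hx, if_neg hy, if_neg hd]
  ring

lemma W_total (j : ℕ) :
    fracTotal (W j) = 2 * (j:ℝ) + 2 + ((j:ℝ)+1)/(3*(j:ℝ)+4) := by
  rw [W, fracTotal_sum]
  simp only [fracTotal_add, fracTotal_single]
  have hZ2 : 2 * ∑ z ∈ Finset.Icc (0:ℤ) (2*(j:ℤ)+1), (2*(j:ℤ)+2-z)
      = (2*(j:ℤ)+2)*(2*(j:ℤ)+3) := by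
    have hg := gauss (2*(j:ℤ)+1) (by omega)
    rw [Finset.sum_sub_distrib, Finset.sum_const, Int.card_Icc, nsmul_eq_mul,
      show (((2*(j:ℤ)+1+1-0).toNat):ℤ) = 2*(j:ℤ)+2 from by omega]
    linear_combination -hg
  have h2 : (2:ℝ) * (∑ z ∈ Finset.Icc (0:ℤ) (2*(j:ℤ)+1), ((2*(j:ℤ)+2-z : ℤ):ℝ))
      = (2*(j:ℝ)+2)*(2*(j:ℝ)+3) := by
    rw [← Int.cast_sum]
    exact_mod_cast hZ2
  have hD : (3*(j:ℝ)+4) ≠ 0 := by positivity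
  simp only [wt]
  rw [Finset.sum_congr rfl (fun z _ => by
    ring_nf : ∀ z ∈ Finset.Icc (0:ℤ) (2*(j:ℤ)+1),
      ((2*(j:ℤ)+2-z : ℤ):ℝ)/(3*(j:ℝ)+4) + ((2*(j:ℤ)+2-z : ℤ):ℝ)/(3*(j:ℝ)+4)
        + ((2*(j:ℤ)+2-z : ℤ):ℝ)/(3*(j:ℝ)+4)
      = 3 * ((2*(j:ℤ)+2-z : ℤ):ℝ) / (3*(j:ℝ)+4))]
  rw [← Finset.sum_div, ← Finset.mul_sum]
  have hS : ∑ z ∈ Finset.Icc (0:ℤ) (2*(j:ℤ)+1), ((2*(j:ℤ)+2-z : ℤ):ℝ)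
      = (2*(j:ℝ)+2)*(2*(j:ℝ)+3)/2 := by linarith [h2]
  rw [hS]
  field_simp
  ring



lemma cover_key (j : ℕ) (a b c : ℤ) (ha : 0 ≤ a) (hb : 0 ≤ b) (hc : 0 ≤ c)
    (h : a + b + c = 3*(j:ℤ)+2) :
    3*(j:ℤ)+4 ≤ max 0 (2*(j:ℤ)+2-a) + max 0 (2*(j:ℤ)+2-b) + max 0 (2*(j:ℤ)+2-c) := by
  omega

lemma W_covers (j : ℕ) : ∀ x ∈ TriGrid 2 (3*j+3), 1 ≤ fracAt (W j) (toReal x) := by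
  intro x hx
  obtain ⟨hpos, hsum⟩ := hx
  have ha0 : 0 ≤ x 0 := hpos 0
  have hb0 : 0 ≤ x 1 := hpos 1
  have hab : x 0 + x 1 ≤ 3*(j:ℤ)+2 := by
    rw [Fin.sum_univ_two] at hsum
    push_cast at hsum
    linarith
  set a := x 0 with hadef
  set b := x 1 with hbdef
  set c : ℤ := 3*(j:ℤ)+2-a-b with hcdef
  have hc0 : 0 ≤ c := by omega
  rw [W, fracAt_sum]
  simp only [fracAt_add, fracAt_single]
  have hcx : ∀ z : ℤ, (∑ i, (lx z).1 i * toReal x i = (lx z).2) ↔ (a = z) := by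
    intro z
    simp only [lx, toReal, Fin.sum_univ_two, Matrix.cons_val_zero, Matrix.cons_val_one,
      Matrix.head_cons, one_mul, zero_mul, add_zero]
    exact_mod_cast Iff.rfl
  have hcy : ∀ z : ℤ, (∑ i, (ly z).1 i * toReal x i = (ly z).2) ↔ (b = z) := by
    intro z
    simp only [ly, toReal, Fin.sum_univ_two, Matrix.cons_val_zero, Matrix.cons_val_one,
      Matrix.head_cons, one_mul, zero_mul, zero_add]
    exact_mod_cast Iff.rfl
  have hcd : ∀ z : ℤ, (∑ i, (ld j z).1 i * toReal x i = (ld j z).2) ↔ (c = z) := by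
    intro z
    simp only [ld, toReal, Fin.sum_univ_two, Matrix.cons_val_zero, Matrix.cons_val_one,
      Matrix.head_cons, one_mul]
    constructor
    · intro h
      have : a + b = 3*(j:ℤ)+2-z := by exact_mod_cast h
      omega
    · intro h
      have : a + b = 3*(j:ℤ)+2-z := by omega
      exact_mod_cast this
  have hrw : ∀ z ∈ Finset.Icc (0:ℤ) (2*(j:ℤ)+1),
      ((if (∑ i, (lx z).1 i * toReal x i = (lx z).2) then wt j z else 0)
        + (if (∑ i, (ly z).1 i * toReal x i = (ly z).2) then wt j z else 0)
        + (if (∑ i, (ld j z).1 i * toReal x i = (ld j z).2) then wt j z else 0))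
      = ((if a = z then wt j z else 0) + (if b = z then wt j z else 0)
          + (if c = z then wt j z else 0)) := by
    intro z _
    rw [if_congr (hcx z) rfl rfl, if_congr (hcy z) rfl rfl, if_congr (hcd z) rfl rfl]
  rw [Finset.sum_congr rfl hrw, Finset.sum_add_distrib, Finset.sum_add_distrib,
    Finset.sum_ite_eq, Finset.sum_ite_eq, Finset.sum_ite_eq]
  have key : ∀ t : ℤ, 0 ≤ t →
      (if t ∈ Finset.Icc (0:ℤ) (2*(j:ℤ)+1) then wt j t else 0)
        = ((max 0 (2*(j:ℤ)+2-t) : ℤ):ℝ)/(3*(j:ℝ)+4) := by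
    intro t ht
    split_ifs with h
    · simp only [Finset.mem_Icc] at h
      rw [wt, show max 0 (2*(j:ℤ)+2-t) = 2*(j:ℤ)+2-t from by omega]
    · simp only [Finset.mem_Icc, not_and, not_le] at h
      rw [show max 0 (2*(j:ℤ)+2-t) = 0 from by omega]
      simp
  rw [key a ha0, key b hb0, key c hc0, ← add_div, ← add_div]
  rw [le_div_iff₀ (by positivity), one_mul]
  have := cover_key j a b c ha0 hb0 hc0 (by omega)
  push_cast
  exact_mod_cast this

theorem upper (j : ℕ) :
    ∃ w : ((Fin 2 → ℝ) × ℝ) →₀ ℝ,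
      IsFracCover 2 (3 * j + 3) w ∧
      fracTotal w = 2 * (j : ℝ) + 2 + ((j : ℝ) + 1) / (3 * (j : ℝ) + 4) := by
  exact ⟨W j, ⟨W_nonneg j, W_support j, W_covers j⟩, W_total j⟩

/-! ### dual certificate -/

noncomputable def Hex (j : ℕ) : Finset (ℤ × ℤ) :=
  ((Finset.Icc (0:ℤ) (2*(j:ℤ)+2)) ×ˢ (Finset.Icc (0:ℤ) (2*(j:ℤ)+2))).filter
    (fun q => (j:ℤ) ≤ q.1 + q.2 ∧ q.1 + q.2 ≤ 3*(j:ℤ)+2)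

lemma mem_Hex {j : ℕ} {q : ℤ × ℤ} : q ∈ Hex j ↔
    0 ≤ q.1 ∧ q.1 ≤ 2*(j:ℤ)+2 ∧ 0 ≤ q.2 ∧ q.2 ≤ 2*(j:ℤ)+2 ∧
      (j:ℤ) ≤ q.1 + q.2 ∧ q.1 + q.2 ≤ 3*(j:ℤ)+2 := by
  simp only [Hex, Finset.mem_filter, Finset.mem_product, Finset.mem_Icc]
  tauto

noncomputable def yv (j : ℕ) (q : ℤ × ℤ) : ℝ :=
  ((Gh j q.1 + Gh j q.2 + Gh j (3*(j:ℤ)+2-q.1-q.2) : ℤ) : ℝ) / (((j:ℝ)+1) * (3*(j:ℝ)+4)^2)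

lemma Spos (j : ℕ) : (0:ℝ) < ((j:ℝ)+1) * (3*(j:ℝ)+4)^2 := by positivity

lemma yv_nonneg (j : ℕ) (q : ℤ × ℤ) : 0 ≤ yv j q := by
  apply div_nonneg _ (le_of_lt (Spos j))
  have h1 := Gh_nonneg j q.1
  have h2 := Gh_nonneg j q.2
  have h3 := Gh_nonneg j (3*(j:ℤ)+2-q.1-q.2)
  have h : (0:ℤ) ≤ Gh j q.1 + Gh j q.2 + Gh j (3*(j:ℤ)+2-q.1-q.2) := by linarith
  exact_mod_cast h

/-- exact column sums -/
lemma colsum_eq (j : ℕ) {a : ℤ} (h0 : 0 ≤ a) (h1 : a ≤ 2*(j:ℤ)+1) :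
    ∑ q ∈ (Hex j).filter (fun q => q.1 = a), yv j q = 1 := by
  have hset : (Hex j).filter (fun q => q.1 = a) = (col j a).image (fun b => (a, b)) := by
    ext q
    simp only [Finset.mem_filter, Finset.mem_image, mem_Hex, col, Finset.mem_Icc]
    constructor
    · rintro ⟨⟨q1,q2,q3,q4,q5,q6⟩, hc⟩
      refine ⟨q.2, by omega, ?_⟩
      rw [← hc]
    · rintro ⟨b, hb, rfl⟩
      dsimp only
      omega
  rw [hset, Finset.sum_image (by intro x _ y _ h; exact (Prod.mk.injEq _ _ _ _).mp h |>.2)]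
  have hcol := colsum_main j h0 h1
  unfold yv
  rw [← Finset.sum_div]
  rw [div_eq_one_iff_eq (ne_of_gt (Spos j))]
  rw [← Int.cast_sum]
  have : ((j:ℝ)+1) * (3*(j:ℝ)+4)^2 = (((j:ℤ)+1) * (3*(j:ℤ)+4)^2 : ℤ) := by push_cast; ring
  rw [this, Int.cast_inj]
  nlinarith [hcol]

lemma colsum_eq_last (j : ℕ) :
    ∑ q ∈ (Hex j).filter (fun q => q.1 = 2*(j:ℤ)+2), yv j q = ((j:ℝ)+1)/(3*(j:ℝ)+4) := by
  have hset : (Hex j).filter (fun q => q.1 = 2*(j:ℤ)+2)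
      = (col j (2*(j:ℤ)+2)).image (fun b => (2*(j:ℤ)+2, b)) := by
    ext q
    simp only [Finset.mem_filter, Finset.mem_image, mem_Hex, col, Finset.mem_Icc]
    constructor
    · rintro ⟨⟨q1,q2,q3,q4,q5,q6⟩, hc⟩
      refine ⟨q.2, by omega, ?_⟩
      rw [← hc]
    · rintro ⟨b, hb, rfl⟩
      dsimp only
      omega
  rw [hset, Finset.sum_image (by intro x _ y _ h; exact (Prod.mk.injEq _ _ _ _).mp h |>.2)]
  have hcol := colsum_last j
  unfold yv
  rw [← Finset.sum_div, ← Int.cast_sum]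
  rw [div_eq_div_iff (ne_of_gt (Spos j)) (by positivity : (3*(j:ℝ)+4) ≠ 0)]
  have hcast : (∑ b ∈ col j (2*(j:ℤ)+2),
      (Gh j (2*(j:ℤ)+2) + Gh j b + Gh j (3*(j:ℤ)+2-(2*(j:ℤ)+2)-b)) : ℤ)
      = ((j:ℤ)+1)^2*(3*(j:ℤ)+4) := by nlinarith [hcol]
  rw [hcast]
  push_cast
  ring

lemma colsum_le (j : ℕ) (a : ℤ) :
    ∑ q ∈ (Hex j).filter (fun q => q.1 = a), yv j q ≤ 1 := by
  rcases le_or_gt a (2*(j:ℤ)+1) with h | h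
  · rcases le_or_gt 0 a with h0 | h0
    · rw [colsum_eq j h0 h]
    · have : (Hex j).filter (fun q => q.1 = a) = ∅ := by
        rw [Finset.filter_eq_empty_iff]
        intro q hq
        have := mem_Hex.mp hq
        omega
      rw [this, Finset.sum_empty]; norm_num
  · rcases eq_or_lt_of_le (by omega : 2*(j:ℤ)+2 ≤ a) with h2 | h2
    · rw [← h2, colsum_eq_last j]
      rw [div_le_one (by positivity)]
      push_cast
      linarith
    · have : (Hex j).filter (fun q => q.1 = a) = ∅ := by
        rw [Finset.filter_eq_empty_iff]
        intro q hq
        have := mem_Hex.mp hq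
        omega
      rw [this, Finset.sum_empty]; norm_num

lemma yv_swap (j : ℕ) (q : ℤ × ℤ) : yv j (q.2, q.1) = yv j q := by
  unfold yv
  norm_num
  ring

lemma rowsum_le (j : ℕ) (b : ℤ) :
    ∑ q ∈ (Hex j).filter (fun q => q.2 = b), yv j q ≤ 1 := by
  have hswap : ∑ q ∈ (Hex j).filter (fun q => q.2 = b), yv j q
      = ∑ q ∈ (Hex j).filter (fun q => q.1 = b), yv j q := by
    apply Finset.sum_nbij' (fun q => (q.2, q.1)) (fun q => (q.2, q.1))
    · intro q hq
      simp only [Finset.mem_filter, mem_Hex] at hq ⊢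
      omega
    · intro q hq
      simp only [Finset.mem_filter, mem_Hex] at hq ⊢
      omega
    · intro q _; rfl
    · intro q _; rfl
    · intro q _; exact (yv_swap j q).symm
  rw [hswap]; exact colsum_le j b

lemma yv_phi (j : ℕ) (q : ℤ × ℤ) : yv j (q.1, 3*(j:ℤ)+2-q.1-q.2) = yv j q := by
  unfold yv
  norm_num
  ring

lemma diagsum_le (j : ℕ) (s : ℤ) :
    ∑ q ∈ (Hex j).filter (fun q => q.1 + q.2 = s), yv j q ≤ 1 := by
  have hphi : ∑ q ∈ (Hex j).filter (fun q => q.1 + q.2 = s), yv j q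
      = ∑ q ∈ (Hex j).filter (fun q => q.2 = 3*(j:ℤ)+2-s), yv j q := by
    apply Finset.sum_nbij' (fun q => (q.1, 3*(j:ℤ)+2-q.1-q.2)) (fun q => (q.1, 3*(j:ℤ)+2-q.1-q.2))
    · intro q hq
      simp only [Finset.mem_filter, mem_Hex] at hq ⊢
      omega
    · intro q hq
      simp only [Finset.mem_filter, mem_Hex] at hq ⊢
      omega
    · intro q _
      have : 3*(j:ℤ)+2-q.1-(3*(j:ℤ)+2-q.1-q.2) = q.2 := by ring
      rw [this]
    · intro q _
      have : 3*(j:ℤ)+2-q.1-(3*(j:ℤ)+2-q.1-q.2) = q.2 := by ring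
      rw [this]
    · intro q _; exact (yv_phi j q).symm
  rw [hphi]; exact rowsum_le j _

/-- pointwise bound on the hexagon -/
lemma yv_le (j : ℕ) {q : ℤ × ℤ} (hq : q ∈ Hex j) :
    yv j q ≤ ((3*(j:ℝ)+2)*(3*(j:ℝ)+4)) / (((j:ℝ)+1)*(3*(j:ℝ)+4)^2) := by
  have h := mem_Hex.mp hq
  have hZ := Yh_le j (a := q.1) (b := q.2) (c := 3*(j:ℤ)+2-q.1-q.2)
    (by omega) (by omega) (by omega) (by omega) (by omega) (by omega) (by omega)
  unfold yv
  apply (div_le_div_iff_of_pos_right (Spos j)).mpr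
  calc ((Gh j q.1 + Gh j q.2 + Gh j (3*(j:ℤ)+2-q.1-q.2) : ℤ) : ℝ)
      ≤ (((3*(j:ℤ)+2)*(3*(j:ℤ)+4) : ℤ) : ℝ) := by exact_mod_cast hZ
    _ = (3*(j:ℝ)+2)*(3*(j:ℝ)+4) := by push_cast; ring

lemma yv_le_D (j : ℕ) {q : ℤ × ℤ} (hq : q ∈ Hex j)
    (hD : q.1 = 2*(j:ℤ)+2 ∨ q.2 = 2*(j:ℤ)+2 ∨ 3*(j:ℤ)+2-q.1-q.2 = 2*(j:ℤ)+2) :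
    yv j q ≤ (((j:ℝ)+1)*(3*(j:ℝ)+4)) / (((j:ℝ)+1)*(3*(j:ℝ)+4)^2) := by
  have h := mem_Hex.mp hq
  set c : ℤ := 3*(j:ℤ)+2-q.1-q.2 with hc
  have hZ : Gh j q.1 + Gh j q.2 + Gh j c ≤ ((j:ℤ)+1)*(3*(j:ℤ)+4) := by
    rcases hD with hD | hD | hD
    · have := Yh_eq_D_core j (b := q.2) (c := c) (by omega) (by omega) (by omega)
      rw [← hD] at this
      linarith
    · have := Yh_eq_D_core j (b := q.1) (c := c) (by omega) (by omega) (by omega)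
      rw [← hD] at this
      linarith
    · have := Yh_eq_D_core j (b := q.1) (c := q.2) (by omega) (by omega) (by omega)
      rw [← hD] at this
      linarith
  unfold yv
  apply (div_le_div_iff_of_pos_right (Spos j)).mpr
  calc ((Gh j q.1 + Gh j q.2 + Gh j (3*(j:ℤ)+2-q.1-q.2) : ℤ) : ℝ)
      ≤ ((((j:ℤ)+1)*(3*(j:ℤ)+4) : ℤ) : ℝ) := by rw [← hc]; exact_mod_cast hZ
    _ = ((j:ℝ)+1)*(3*(j:ℝ)+4) := by push_cast; ring

def OnL (H : Line 2) (q : ℤ × ℤ) : Prop := H.1 0 * (q.1:ℝ) + H.1 1 * (q.2:ℝ) = H.2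

lemma sandwich {x y z : ℤ} (h : 0 ≤ (y - x)*(z - y)) : min x z ≤ y ∧ y ≤ max x z := by
  rcases le_total x y with h1 | h1 <;> rcases le_total y z with h2 | h2
  · exact ⟨by omega, by omega⟩
  · have : y ≤ x ∨ y ≤ z := by
      by_contra hcon
      push_neg at hcon
      nlinarith [hcon.1, hcon.2]
    omega
  · have : x ≤ y ∨ z ≤ y := by
      by_contra hcon
      push_neg at hcon
      nlinarith [hcon.1, hcon.2]
    omega
  · exact ⟨by omega, by omega⟩

/-- cardinality bound via an injective coordinate confined to an interval -/
lemma card_le_span {F : Finset (ℤ × ℤ)} {f : ℤ × ℤ → ℤ} {lo hi : ℤ}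
    (hne : F.Nonempty)
    (hinj : ∀ p ∈ F, ∀ r ∈ F, f p = f r → p = r)
    (hbd : ∀ r ∈ F, lo ≤ f r ∧ f r ≤ hi) :
    (F.card : ℤ) ≤ hi - lo + 1 := by
  have hpos : 1 ≤ F.card := Finset.card_pos.mpr hne
  have himg : F.image f ⊆ Finset.Icc lo hi := by
    intro t ht
    obtain ⟨r, hr, rfl⟩ := Finset.mem_image.mp ht
    exact Finset.mem_Icc.mpr (hbd r hr)
  have hc1 : (F.image f).card = F.card :=
    Finset.card_image_of_injOn (fun p hp r hr h => hinj p hp r hr h)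
  have := Finset.card_le_card himg
  rw [hc1, Int.card_Icc] at this
  omega

lemma genline (j : ℕ) (H : Line 2) (hA0 : H.1 0 ≠ 0) (hA1 : H.1 1 ≠ 0)
    (hAd : H.1 0 ≠ H.1 1) :
    ∑ q ∈ (Hex j).filter (fun q => OnL H q), yv j q ≤ 1 := by
  set A0 := H.1 0 with hA0def
  set A1 := H.1 1 with hA1def
  set F := (Hex j).filter (fun q => OnL H q) with hF
  have hlineF : ∀ r ∈ F, A0 * (r.1:ℝ) + A1 * (r.2:ℝ) = H.2 := by
    intro r hr
    exact (Finset.mem_filter.mp hr).2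
  have hHexF : ∀ r ∈ F, r ∈ Hex j := fun r hr => (Finset.mem_filter.mp hr).1
  have hinj1 : ∀ p ∈ F, ∀ r ∈ F, p.1 = r.1 → p = r := by
    intro p hp r hr h
    have e1 := hlineF p hp
    have e2 := hlineF r hr
    have hc : (p.1:ℝ) = (r.1:ℝ) := by exact_mod_cast h
    have : A1 * ((p.2:ℝ) - (r.2:ℝ)) = 0 := by rw [hc] at e1; linarith
    have h2 : (p.2:ℝ) = (r.2:ℝ) := by
      have := mul_eq_zero.mp this
      rcases this with h' | h'
      · exact absurd h' hA1
      · linarith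
    have : p.2 = r.2 := by exact_mod_cast h2
    exact Prod.ext h this
  have hinj2 : ∀ p ∈ F, ∀ r ∈ F, p.2 = r.2 → p = r := by
    intro p hp r hr h
    have e1 := hlineF p hp
    have e2 := hlineF r hr
    have hc : (p.2:ℝ) = (r.2:ℝ) := by exact_mod_cast h
    have : A0 * ((p.1:ℝ) - (r.1:ℝ)) = 0 := by rw [hc] at e1; linarith
    have h2 : (p.1:ℝ) = (r.1:ℝ) := by
      rcases mul_eq_zero.mp this with h' | h'
      · exact absurd h' hA0
      · linarith
    have : p.1 = r.1 := by exact_mod_cast h2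
    exact Prod.ext this h
  have hinj3 : ∀ p ∈ F, ∀ r ∈ F, 3*(j:ℤ)+2-p.1-p.2 = 3*(j:ℤ)+2-r.1-r.2 → p = r := by
    intro p hp r hr h
    have e1 := hlineF p hp
    have e2 := hlineF r hr
    have hsum : (p.1:ℝ) + (p.2:ℝ) = (r.1:ℝ) + (r.2:ℝ) := by
      have : p.1 + p.2 = r.1 + r.2 := by omega
      exact_mod_cast this
    have : (A0 - A1) * ((p.1:ℝ) - (r.1:ℝ)) = 0 := by linear_combination e1 - e2 - A1 * hsum
    have h2 : (p.1:ℝ) = (r.1:ℝ) := by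
      rcases mul_eq_zero.mp this with h' | h'
      · exact absurd (by linarith : A0 = A1) hAd
      · linarith
    exact hinj1 p hp r hr (by exact_mod_cast h2)
  set k := F.card with hk
  have hB1 : ∀ r ∈ F, yv j r ≤ ((3*(j:ℝ)+2)*(3*(j:ℝ)+4)) / (((j:ℝ)+1)*(3*(j:ℝ)+4)^2) :=
    fun r hr => yv_le j (hHexF r hr)
  rcases le_or_gt k (j+1) with hkle | hkgt
  · -- small case
    calc ∑ q ∈ F, yv j q
        ≤ ∑ _q ∈ F, ((3*(j:ℝ)+2)*(3*(j:ℝ)+4)) / (((j:ℝ)+1)*(3*(j:ℝ)+4)^2) :=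
          Finset.sum_le_sum hB1
      _ = (k:ℝ) * (((3*(j:ℝ)+2)*(3*(j:ℝ)+4)) / (((j:ℝ)+1)*(3*(j:ℝ)+4)^2)) := by
          rw [Finset.sum_const, nsmul_eq_mul]
      _ ≤ ((j:ℝ)+1) * (((3*(j:ℝ)+2)*(3*(j:ℝ)+4)) / (((j:ℝ)+1)*(3*(j:ℝ)+4)^2)) := by
          apply mul_le_mul_of_nonneg_right _ (by positivity)
          exact_mod_cast hkle
      _ ≤ 1 := by
          rw [mul_div_assoc']
          rw [div_le_one (by positivity)]
          nlinarith [sq_nonneg ((j:ℝ)+1)]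
  · -- large case
    have hne : F.Nonempty := Finset.card_pos.mp (by omega)
    obtain ⟨p, hp, hpmax⟩ := Finset.exists_max_image F (fun q => q.1) hne
    obtain ⟨q, hq, hqmin⟩ := Finset.exists_min_image F (fun q => q.1) hne
    -- a-span
    have hsp1 : (k:ℤ) ≤ p.1 - q.1 + 1 :=
      card_le_span hne hinj1 (fun r hr => ⟨hqmin r hr, hpmax r hr⟩)
    -- b between
    have hbet2 : ∀ r ∈ F, 0 ≤ (r.2 - q.2)*(p.2 - r.2) := by
      intro r hr
      have e1 : A1 * ((r.2:ℝ) - (q.2:ℝ)) = -A0 * ((r.1:ℝ) - (q.1:ℝ)) := by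
        linear_combination (hlineF r hr) - (hlineF q hq)
      have e2 : A1 * ((p.2:ℝ) - (r.2:ℝ)) = -A0 * ((p.1:ℝ) - (r.1:ℝ)) := by
        linear_combination (hlineF p hp) - (hlineF r hr)
      have hU : (0:ℝ) ≤ ((r.1:ℝ) - (q.1:ℝ)) := by
        have := hqmin r hr; exact_mod_cast sub_nonneg.mpr (by exact_mod_cast this)
      have hV : (0:ℝ) ≤ ((p.1:ℝ) - (r.1:ℝ)) := by
        have := hpmax r hr; exact_mod_cast sub_nonneg.mpr (by exact_mod_cast this)
      have h4 : 0 ≤ (A1*A1) * (((r.2:ℝ) - q.2)*((p.2:ℝ) - r.2)) := by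
        have : (A1 * ((r.2:ℝ) - q.2)) * (A1 * ((p.2:ℝ) - r.2))
            = (-A0 * ((r.1:ℝ) - q.1)) * (-A0 * ((p.1:ℝ) - r.1)) := by rw [e1, e2]
        nlinarith [mul_nonneg hU hV, sq_nonneg A0]
      have h5 : 0 ≤ ((r.2:ℝ) - q.2)*((p.2:ℝ) - r.2) := by
        by_contra hcon
        push_neg at hcon
        nlinarith [mul_self_pos.mpr hA1]
      exact_mod_cast h5
    -- c between
    have hbet3 : ∀ r ∈ F, 0 ≤ ((3*(j:ℤ)+2-r.1-r.2) - (3*(j:ℤ)+2-q.1-q.2))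
        * ((3*(j:ℤ)+2-p.1-p.2) - (3*(j:ℤ)+2-r.1-r.2)) := by
      intro r hr
      have e1 : A1 * (((3*(j:ℤ)+2-r.1-r.2 : ℤ):ℝ) - ((3*(j:ℤ)+2-q.1-q.2 : ℤ):ℝ))
          = (A0 - A1) * ((r.1:ℝ) - (q.1:ℝ)) := by
        push_cast
        linear_combination (hlineF q hq) - (hlineF r hr)
      have e2 : A1 * (((3*(j:ℤ)+2-p.1-p.2 : ℤ):ℝ) - ((3*(j:ℤ)+2-r.1-r.2 : ℤ):ℝ))
          = (A0 - A1) * ((p.1:ℝ) - (r.1:ℝ)) := by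
        push_cast
        linear_combination (hlineF r hr) - (hlineF p hp)
      have hU : (0:ℝ) ≤ ((r.1:ℝ) - (q.1:ℝ)) := by
        have := hqmin r hr; exact_mod_cast sub_nonneg.mpr (by exact_mod_cast this)
      have hV : (0:ℝ) ≤ ((p.1:ℝ) - (r.1:ℝ)) := by
        have := hpmax r hr; exact_mod_cast sub_nonneg.mpr (by exact_mod_cast this)
      have h4 : 0 ≤ (A1*A1) * ((((3*(j:ℤ)+2-r.1-r.2 : ℤ):ℝ) - ((3*(j:ℤ)+2-q.1-q.2 : ℤ):ℝ))
          * (((3*(j:ℤ)+2-p.1-p.2 : ℤ):ℝ) - ((3*(j:ℤ)+2-r.1-r.2 : ℤ):ℝ))) := by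
        have : (A1 * (((3*(j:ℤ)+2-r.1-r.2 : ℤ):ℝ) - ((3*(j:ℤ)+2-q.1-q.2 : ℤ):ℝ)))
            * (A1 * (((3*(j:ℤ)+2-p.1-p.2 : ℤ):ℝ) - ((3*(j:ℤ)+2-r.1-r.2 : ℤ):ℝ)))
            = ((A0-A1) * ((r.1:ℝ) - q.1)) * ((A0-A1) * ((p.1:ℝ) - r.1)) := by rw [e1, e2]
        nlinarith [mul_nonneg hU hV, sq_nonneg (A0-A1)]
      have h5 : 0 ≤ (((3*(j:ℤ)+2-r.1-r.2 : ℤ):ℝ) - ((3*(j:ℤ)+2-q.1-q.2 : ℤ):ℝ))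
          * (((3*(j:ℤ)+2-p.1-p.2 : ℤ):ℝ) - ((3*(j:ℤ)+2-r.1-r.2 : ℤ):ℝ)) := by
        by_contra hcon
        push_neg at hcon
        nlinarith [mul_self_pos.mpr hA1]
      exact_mod_cast h5
    -- spans for b and c
    have hsp2 : (k:ℤ) ≤ max q.2 p.2 - min q.2 p.2 + 1 := by
      apply card_le_span hne hinj2
      intro r hr
      exact sandwich (hbet2 r hr)
    have hsp3 : (k:ℤ) ≤ max (3*(j:ℤ)+2-q.1-q.2) (3*(j:ℤ)+2-p.1-p.2)
        - min (3*(j:ℤ)+2-q.1-q.2) (3*(j:ℤ)+2-p.1-p.2) + 1 := by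
      apply card_le_span hne hinj3
      intro r hr
      exact sandwich (hbet3 r hr)
    -- coordinate bounds
    have hpH := mem_Hex.mp (hHexF p hp)
    have hqH := mem_Hex.mp (hHexF q hq)
    -- the witness
    have hwit : (k:ℤ) = (j:ℤ)+2 ∧
        (q.1 = 2*(j:ℤ)+2 ∨ p.1 = 2*(j:ℤ)+2 ∨ q.2 = 2*(j:ℤ)+2 ∨ p.2 = 2*(j:ℤ)+2 ∨
          3*(j:ℤ)+2-q.1-q.2 = 2*(j:ℤ)+2 ∨ 3*(j:ℤ)+2-p.1-p.2 = 2*(j:ℤ)+2) := by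
      omega
    obtain ⟨hkk, hdisj⟩ := hwit
    have hwit2 : ∃ r ∈ F, (r.1 = 2*(j:ℤ)+2 ∨ r.2 = 2*(j:ℤ)+2 ∨
        3*(j:ℤ)+2-r.1-r.2 = 2*(j:ℤ)+2) := by
      rcases hdisj with h|h|h|h|h|h
      · exact ⟨q, hq, Or.inl h⟩
      · exact ⟨p, hp, Or.inl h⟩
      · exact ⟨q, hq, Or.inr (Or.inl h)⟩
      · exact ⟨p, hp, Or.inr (Or.inl h)⟩
      · exact ⟨q, hq, Or.inr (Or.inr h)⟩
      · exact ⟨p, hp, Or.inr (Or.inr h)⟩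
    obtain ⟨r, hr, hrD⟩ := hwit2
    rw [← Finset.add_sum_erase F (yv j) hr]
    have herase : ∀ t ∈ F.erase r, yv j t ≤ ((3*(j:ℝ)+2)*(3*(j:ℝ)+4)) / (((j:ℝ)+1)*(3*(j:ℝ)+4)^2) :=
      fun t ht => hB1 t (Finset.mem_of_mem_erase ht)
    have hcarderase : ((F.erase r).card : ℝ) = (j:ℝ) + 1 := by
      rw [Finset.card_erase_of_mem hr]
      have : (k:ℤ) = (j:ℤ) + 2 := hkk
      have hk2 : k = j + 2 := by exact_mod_cast this
      rw [← hk, hk2]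
      push_cast
      ring
    calc yv j r + ∑ t ∈ F.erase r, yv j t
        ≤ (((j:ℝ)+1)*(3*(j:ℝ)+4)) / (((j:ℝ)+1)*(3*(j:ℝ)+4)^2)
          + ((j:ℝ)+1) * (((3*(j:ℝ)+2)*(3*(j:ℝ)+4)) / (((j:ℝ)+1)*(3*(j:ℝ)+4)^2)) := by
          apply add_le_add (yv_le_D j (hHexF r hr) hrD)
          calc ∑ t ∈ F.erase r, yv j t
              ≤ ∑ _t ∈ F.erase r, ((3*(j:ℝ)+2)*(3*(j:ℝ)+4)) / (((j:ℝ)+1)*(3*(j:ℝ)+4)^2) :=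
                Finset.sum_le_sum herase
            _ = ((j:ℝ)+1) * (((3*(j:ℝ)+2)*(3*(j:ℝ)+4)) / (((j:ℝ)+1)*(3*(j:ℝ)+4)^2)) := by
                rw [Finset.sum_const, nsmul_eq_mul, hcarderase]
      _ = (((j:ℝ)+1)*(3*(j:ℝ)+4) + ((j:ℝ)+1)*((3*(j:ℝ)+2)*(3*(j:ℝ)+4)))
            / (((j:ℝ)+1)*(3*(j:ℝ)+4)^2) := by
          rw [← mul_div_assoc, ← add_div]
      _ ≤ 1 := by
          rw [div_le_one (by positivity)]
          nlinarith [mul_pos (show (0:ℝ) < (j:ℝ)+1 by positivity)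
            (show (0:ℝ) < 3*(j:ℝ)+4 by positivity)]

lemma line_bound (j : ℕ) (H : Line 2) (hH : H.1 ≠ 0) :
    ∑ q ∈ (Hex j).filter (fun q => OnL H q), yv j q ≤ 1 := by
  by_cases h1 : H.1 1 = 0
  · have h0 : H.1 0 ≠ 0 := by
      intro h0
      apply hH
      funext i
      fin_cases i
      · simpa using h0
      · simpa using h1
    rcases Finset.eq_empty_or_nonempty ((Hex j).filter (fun q => OnL H q)) with he | ⟨p₀, hp₀⟩
    · rw [he]; simp
    · have hsub : (Hex j).filter (fun q => OnL H q) ⊆ (Hex j).filter (fun q => q.1 = p₀.1) := by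
        intro r hr
        simp only [Finset.mem_filter] at hr ⊢
        refine ⟨hr.1, ?_⟩
        have e1 : H.1 0 * (r.1:ℝ) + H.1 1 * (r.2:ℝ) = H.2 := hr.2
        have e2 : H.1 0 * (p₀.1:ℝ) + H.1 1 * (p₀.2:ℝ) = H.2 := (Finset.mem_filter.mp hp₀).2
        rw [h1, zero_mul, add_zero] at e1 e2
        have : (r.1:ℝ) = (p₀.1:ℝ) := mul_left_cancel₀ h0 (e1.trans e2.symm)
        exact_mod_cast this
      calc ∑ q ∈ (Hex j).filter (fun q => OnL H q), yv j q
          ≤ ∑ q ∈ (Hex j).filter (fun q => q.1 = p₀.1), yv j q :=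
            Finset.sum_le_sum_of_subset_of_nonneg hsub (fun t _ _ => yv_nonneg j t)
        _ ≤ 1 := colsum_le j p₀.1
  · by_cases h0 : H.1 0 = 0
    · rcases Finset.eq_empty_or_nonempty ((Hex j).filter (fun q => OnL H q)) with he | ⟨p₀, hp₀⟩
      · rw [he]; simp
      · have hsub : (Hex j).filter (fun q => OnL H q) ⊆ (Hex j).filter (fun q => q.2 = p₀.2) := by
          intro r hr
          simp only [Finset.mem_filter] at hr ⊢
          refine ⟨hr.1, ?_⟩
          have e1 : H.1 0 * (r.1:ℝ) + H.1 1 * (r.2:ℝ) = H.2 := hr.2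
          have e2 : H.1 0 * (p₀.1:ℝ) + H.1 1 * (p₀.2:ℝ) = H.2 := (Finset.mem_filter.mp hp₀).2
          rw [h0, zero_mul, zero_add] at e1 e2
          have : (r.2:ℝ) = (p₀.2:ℝ) := mul_left_cancel₀ h1 (e1.trans e2.symm)
          exact_mod_cast this
        calc ∑ q ∈ (Hex j).filter (fun q => OnL H q), yv j q
            ≤ ∑ q ∈ (Hex j).filter (fun q => q.2 = p₀.2), yv j q :=
              Finset.sum_le_sum_of_subset_of_nonneg hsub (fun t _ _ => yv_nonneg j t)
          _ ≤ 1 := rowsum_le j p₀.2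
    · by_cases hd : H.1 0 = H.1 1
      · rcases Finset.eq_empty_or_nonempty ((Hex j).filter (fun q => OnL H q)) with he | ⟨p₀, hp₀⟩
        · rw [he]; simp
        · have hsub : (Hex j).filter (fun q => OnL H q)
              ⊆ (Hex j).filter (fun q => q.1 + q.2 = p₀.1 + p₀.2) := by
            intro r hr
            simp only [Finset.mem_filter] at hr ⊢
            refine ⟨hr.1, ?_⟩
            have e1 : H.1 0 * (r.1:ℝ) + H.1 1 * (r.2:ℝ) = H.2 := hr.2
            have e2 : H.1 0 * (p₀.1:ℝ) + H.1 1 * (p₀.2:ℝ) = H.2 := (Finset.mem_filter.mp hp₀).2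
            rw [hd] at e1 e2
            have e3 : H.1 1 * ((r.1:ℝ) + (r.2:ℝ)) = H.1 1 * ((p₀.1:ℝ) + (p₀.2:ℝ)) := by
              ring_nf
              ring_nf at e1 e2
              linarith
            have : (r.1:ℝ) + (r.2:ℝ) = (p₀.1:ℝ) + (p₀.2:ℝ) := mul_left_cancel₀ h1 e3
            exact_mod_cast this
          calc ∑ q ∈ (Hex j).filter (fun q => OnL H q), yv j q
              ≤ ∑ q ∈ (Hex j).filter (fun q => q.1 + q.2 = p₀.1 + p₀.2), yv j q :=
                Finset.sum_le_sum_of_subset_of_nonneg hsub (fun t _ _ => yv_nonneg j t)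
            _ ≤ 1 := diagsum_le j _
      · exact genline j H h0 h1 hd

lemma total_eq (j : ℕ) :
    ∑ q ∈ Hex j, yv j q = 2*(j:ℝ)+2 + ((j:ℝ)+1)/(3*(j:ℝ)+4) := by
  have hfib := Finset.sum_fiberwise_of_maps_to
    (s := Hex j) (g := fun q : ℤ×ℤ => q.1) (t := Finset.Icc (0:ℤ) (2*(j:ℤ)+2))
    (fun q hq => Finset.mem_Icc.mpr (by
      have := mem_Hex.mp hq
      show 0 ≤ q.1 ∧ q.1 ≤ 2*(j:ℤ)+2
      omega)) (yv j)
  rw [← hfib]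
  have hins : Finset.Icc (0:ℤ) (2*(j:ℤ)+2) = insert (2*(j:ℤ)+2) (Finset.Icc 0 (2*(j:ℤ)+1)) := by
    ext x; simp only [Finset.mem_Icc, Finset.mem_insert]; omega
  rw [hins, Finset.sum_insert (by simp only [Finset.mem_Icc]; omega)]
  rw [colsum_eq_last j]
  have hone : ∀ a ∈ Finset.Icc (0:ℤ) (2*(j:ℤ)+1),
      ∑ q ∈ (Hex j).filter (fun q => q.1 = a), yv j q = 1 := by
    intro a ha
    simp only [Finset.mem_Icc] at ha
    exact colsum_eq j ha.1 ha.2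
  rw [Finset.sum_congr rfl hone, Finset.sum_const, Int.card_Icc]
  have hc : ((2*(j:ℤ)+1+1-0).toNat : ℝ) = 2*(j:ℝ)+2 := by
    have : (2*(j:ℤ)+1+1-0).toNat = 2*j+2 := by omega
    rw [this]; push_cast; ring
  rw [nsmul_eq_mul, hc]
  ring

lemma lower (j : ℕ) (w : ((Fin 2 → ℝ) × ℝ) →₀ ℝ) (hw : IsFracCover 2 (3*j+3) w) :
    2*(j:ℝ)+2 + ((j:ℝ)+1)/(3*(j:ℝ)+4) ≤ fracTotal w := by
  obtain ⟨hpos, hsupp, hcov⟩ := hw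
  have hgrid : ∀ q ∈ Hex j, (![q.1, q.2] : Fin 2 → ℤ) ∈ TriGrid 2 (3*j+3) := by
    intro q hq
    have h := mem_Hex.mp hq
    constructor
    · intro i
      fin_cases i
      · simpa using h.1
      · simpa using h.2.2.1
    · rw [Fin.sum_univ_two]
      simp only [Matrix.cons_val_zero, Matrix.cons_val_one, Matrix.head_cons]
      push_cast
      omega
  have hOnL : ∀ (Hh : Line 2) (q : ℤ × ℤ),
      (∑ i, Hh.1 i * (toReal (![q.1, q.2]) i) = Hh.2) ↔ OnL Hh q := by
    intro Hh q
    rw [Fin.sum_univ_two]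
    simp [OnL, toReal]
  have step1 : ∑ q ∈ Hex j, yv j q ≤ ∑ q ∈ Hex j, yv j q * fracAt w (toReal ![q.1, q.2]) := by
    apply Finset.sum_le_sum
    intro q hq
    have h1 := hcov _ (hgrid q hq)
    nlinarith [yv_nonneg j q]
  have step2 : ∀ q : ℤ × ℤ, yv j q * fracAt w (toReal ![q.1, q.2])
      = ∑ Hh ∈ w.support, (if OnL Hh q then yv j q * w Hh else 0) := by
    intro q
    rw [fracAt, Finset.mul_sum, ← Finset.sum_filter]
    apply Finset.sum_congr
    · apply Finset.filter_congr
      intro Hh _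
      first
        | exact hOnL Hh q
        | exact propext (hOnL Hh q)
        | (simp only [eq_iff_iff]; exact hOnL Hh q)
    · intro Hh _; rfl
  have step3 : ∑ q ∈ Hex j, ∑ Hh ∈ w.support, (if OnL Hh q then yv j q * w Hh else 0)
      = ∑ Hh ∈ w.support, (∑ q ∈ (Hex j).filter (fun q => OnL Hh q), yv j q) * w Hh := by
    rw [Finset.sum_comm]
    apply Finset.sum_congr rfl
    intro Hh _
    rw [Finset.sum_mul, Finset.sum_filter]
  have step4 : ∑ Hh ∈ w.support, (∑ q ∈ (Hex j).filter (fun q => OnL Hh q), yv j q) * w Hh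
      ≤ ∑ Hh ∈ w.support, w Hh := by
    apply Finset.sum_le_sum
    intro Hh hHh
    have hb := line_bound j Hh (hsupp Hh hHh)
    have hnn : (0:ℝ) ≤ ∑ q ∈ (Hex j).filter (fun q => OnL Hh q), yv j q :=
      Finset.sum_nonneg (fun t _ => yv_nonneg j t)
    nlinarith [hpos Hh]
  have := total_eq j
  calc 2*(j:ℝ)+2 + ((j:ℝ)+1)/(3*(j:ℝ)+4) = ∑ q ∈ Hex j, yv j q := (total_eq j).symm
    _ ≤ ∑ q ∈ Hex j, yv j q * fracAt w (toReal ![q.1, q.2]) := step1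
    _ = ∑ q ∈ Hex j, ∑ Hh ∈ w.support, (if OnL Hh q then yv j q * w Hh else 0) :=
        Finset.sum_congr rfl (fun q _ => step2 q)
    _ = ∑ Hh ∈ w.support, (∑ q ∈ (Hex j).filter (fun q => OnL Hh q), yv j q) * w Hh := step3
    _ ≤ ∑ Hh ∈ w.support, w Hh := step4
    _ = fracTotal w := rfl

end FracCov

theorem stmt10 (j : ℕ) :
    (∃ w : ((Fin 2 → ℝ) × ℝ) →₀ ℝ,
      IsFracCover 2 (3 * j + 3) w ∧
      fracTotal w = 2 * (j : ℝ) + 2 + ((j : ℝ) + 1) / (3 * (j : ℝ) + 4)) ∧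
    (∀ w : ((Fin 2 → ℝ) × ℝ) →₀ ℝ,
      IsFracCover 2 (3 * j + 3) w →
      2 * (j : ℝ) + 2 + ((j : ℝ) + 1) / (3 * (j : ℝ) + 4) ≤ fracTotal w) := by
  constructor
  · exact FracCov.upper j
  · exact fun w hw => FracCov.lower j w hw
end

section
/- For every d ≥ 1 and n ≥ 1, with q and r defined by n + ⌈n/d⌉ = q(d+1) + r, 0 ≤ r < d+1, the following multiset of n + ⌈n/d⌉ hyperplanes covers every point of T_d(n) at least twice: x_i = j for 1 ≤ i ≤ r and 0 ≤ j ≤ q; x_i = j for r+1 ≤ i ≤ d and 0 ≤ j ≤ q−1; and x_1+⋯+x_d = n−1−j for 0 ≤ j ≤ q−1. -/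
open scoped Classical

/-- `n + ⌈n/d⌉`. -/
def N13 (n d : ℕ) : ℕ := n + (n + d - 1) / d

/-- `q` with `n + ⌈n/d⌉ = q(d+1) + r`, `0 ≤ r < d+1`. -/
def q13 (n d : ℕ) : ℕ := N13 n d / (d + 1)

/-- `r` with `n + ⌈n/d⌉ = q(d+1) + r`, `0 ≤ r < d+1`. -/
def r13 (n d : ℕ) : ℕ := N13 n d % (d + 1)

/-- The explicit 2-cover: hyperplanes `x_i = j` for the first `r` coordinates and
`0 ≤ j ≤ q`, hyperplanes `x_i = j` for the remaining coordinates and `0 ≤ j ≤ q - 1`,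
and hyperplanes `x_1 + ⋯ + x_d = n - 1 - j` for `0 ≤ j ≤ q - 1`. -/
noncomputable def cover13 (n d : ℕ) : Multiset ((Fin d → ℝ) × ℝ) :=
  (((Finset.univ : Finset (Fin d)) ×ˢ Finset.range (q13 n d + 1)).filter
      (fun ij => (ij.1 : ℕ) < r13 n d)).val.map
    (fun ij => (Pi.single ij.1 (1 : ℝ), (ij.2 : ℝ))) +
  (((Finset.univ : Finset (Fin d)) ×ˢ Finset.range (q13 n d)).filter
      (fun ij => r13 n d ≤ (ij.1 : ℕ))).val.map
    (fun ij => (Pi.single ij.1 (1 : ℝ), (ij.2 : ℝ))) +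
  (Finset.range (q13 n d)).val.map
    (fun j => ((fun _ => (1 : ℝ)), (n : ℝ) - 1 - (j : ℝ)))

lemma aux13_card_filter_lt (d r : ℕ) (h : r ≤ d) :
    ((Finset.univ : Finset (Fin d)).filter fun i : Fin d => (i : ℕ) < r).card = r := by
  have : ((Finset.univ : Finset (Fin d)).filter fun i : Fin d => (i : ℕ) < r).card
      = (Finset.range r).card := by
    apply Finset.card_bij (fun (i : Fin d) _ => (i : ℕ))
    · intro a ha; simp at ha ⊢; exact ha
    · intro a ha b hb hab; exact Fin.val_injective hab
    · intro m hm; simp at hm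
      exact ⟨⟨m, lt_of_lt_of_le hm h⟩, by simp [hm], rfl⟩
  simpa using this

/-- `cover13` with its third component written as a clean `Multiset.map`. -/
lemma aux13_cover13_eq (n d : ℕ) :
    cover13 n d =
      (((Finset.univ : Finset (Fin d)) ×ˢ Finset.range (q13 n d + 1)).filter
          (fun ij => (ij.1 : ℕ) < r13 n d)).val.map
        (fun ij => ((Pi.single ij.1 (1 : ℝ) : Fin d → ℝ), ((ij.2 : ℕ) : ℝ))) +
      (((Finset.univ : Finset (Fin d)) ×ˢ Finset.range (q13 n d)).filter
          (fun ij => r13 n d ≤ (ij.1 : ℕ))).val.map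
        (fun ij => ((Pi.single ij.1 (1 : ℝ) : Fin d → ℝ), ((ij.2 : ℕ) : ℝ))) +
      (Finset.range (q13 n d)).val.map
        (fun j : ℕ => ((fun _ => (1 : ℝ)), (n : ℝ) - 1 - ((j : ℕ) : ℝ))) := by
  unfold cover13
  congr 1
  simp only [bind, Multiset.bind, Multiset.map_map, pure]
  rw [Multiset.map_join]
  simp [Multiset.map_map, Function.comp]
  simp [Function.comp_def, Multiset.map_singleton]
  exact Multiset.bind_singleton ..

lemma aux13_single_sum (d : ℕ) (i0 : Fin d) (y : Fin d → ℝ) :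
    ∑ i, (Pi.single i0 (1:ℝ) : Fin d → ℝ) i * y i = y i0 := by
  simp [Pi.single_apply, ite_mul]

theorem stmt13 (d n : ℕ) (hd : 1 ≤ d) (hn : 1 ≤ n) :
    Multiset.card (cover13 n d) = N13 n d ∧
    (∀ x ∈ TriGrid d n, 2 ≤ hypCount d (cover13 n d) (toReal x)) := by
  have hr : r13 n d ≤ d := Nat.lt_succ_iff.mp (Nat.mod_lt _ (by omega))
  have hN : N13 n d = n + (n + d - 1) / d := rfl
  set c := (n + d - 1) / d with hc
  have hqr : (d + 1) * q13 n d + r13 n d = n + c := by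
    rw [← hN]; exact Nat.div_add_mod (N13 n d) (d + 1)
  have hnc : n ≤ d * c := by
    have h1 := Nat.div_add_mod (n + d - 1) d
    have h2 : (n + d - 1) % d < d := Nat.mod_lt _ (by omega)
    rw [← hc] at h1
    omega
  have hcq : q13 n d ≤ c := by
    by_contra h
    push_neg at h
    have key : (d + 1) * (c + 1) ≤ (d + 1) * q13 n d := Nat.mul_le_mul_left (d + 1) h
    have h3 : (d + 1) * (c + 1) = d * c + d + c + 1 := by ring
    omega
  have hrq : 1 ≤ r13 n d → q13 n d + 1 ≤ c := by
    intro h1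
    by_contra h
    push_neg at h
    have hq2 : q13 n d = c := by omega
    rw [hq2] at hqr
    have hexp : (d + 1) * c = d * c + c := by ring
    omega
  constructor
  · -- cardinality
    rw [aux13_cover13_eq]
    simp only [Multiset.card_add, Multiset.card_map, ← Finset.card_def,
      Finset.filter_product_left (fun i : Fin d => (i : ℕ) < r13 n d),
      Finset.filter_product_left (fun i : Fin d => r13 n d ≤ (i : ℕ)),
      Finset.card_product, Finset.card_range, aux13_card_filter_lt d _ hr]
    have hneg : ((Finset.univ : Finset (Fin d)).filter fun i : Fin d => r13 n d ≤ (i : ℕ)).card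
        = d - r13 n d := by
      have h2 := Finset.card_filter_add_card_filter_not
        (s := (Finset.univ : Finset (Fin d))) (p := fun i : Fin d => (i : ℕ) < r13 n d)
      rw [aux13_card_filter_lt d _ hr, Finset.card_univ, Fintype.card_fin] at h2
      have heq : ((Finset.univ : Finset (Fin d)).filter fun i : Fin d => ¬ (i : ℕ) < r13 n d)
          = (Finset.univ : Finset (Fin d)).filter fun i : Fin d => r13 n d ≤ (i : ℕ) := by
        apply Finset.filter_congr; intro i _; simp [not_lt]
      rw [heq] at h2
      omega
    rw [hneg]
    obtain ⟨e, he, hd2⟩ : ∃ e, d - r13 n d = e ∧ d = e + r13 n d := ⟨d - r13 n d, rfl, by omega⟩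
    rw [he]
    have e1 : r13 n d * (q13 n d + 1) = r13 n d * q13 n d + r13 n d := by ring
    have e2 : (d + 1) * q13 n d = d * q13 n d + q13 n d := by ring
    have e3 : d * q13 n d = (e + r13 n d) * q13 n d := by rw [← hd2]
    have e4 : (e + r13 n d) * q13 n d = e * q13 n d + r13 n d * q13 n d := by ring
    omega
  · -- covering
    rintro x ⟨hx0, hxs⟩
    have htr : toReal x = fun i => (x i : ℝ) := rfl
    rw [htr, hypCount, aux13_cover13_eq]
    simp only [Multiset.countP_add, Multiset.countP_map, ← Finset.filter_val,
      ← Finset.card_def, Finset.filter_filter, aux13_single_sum, toReal, one_mul]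
    set S1 := Finset.univ.filter
      (fun i : Fin d => (i : ℕ) < r13 n d ∧ x i ≤ (q13 n d : ℤ)) with hS1def
    set S2 := Finset.univ.filter
      (fun i : Fin d => r13 n d ≤ (i : ℕ) ∧ x i ≤ (q13 n d : ℤ) - 1) with hS2def
    have hS1 : S1.card ≤ (Finset.filter
        (fun a : Fin d × ℕ => (a.1 : ℕ) < r13 n d ∧ ((x a.1 : ℝ) = (a.2 : ℝ)))
        (Finset.univ ×ˢ Finset.range (q13 n d + 1))).card := by
      apply Finset.card_le_card_of_injOn (fun i => (i, (x i).toNat))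
      · intro i hi
        simp only [hS1def, Finset.mem_filter, Finset.mem_univ, true_and, Finset.mem_coe] at hi
        simp only [Finset.mem_coe, Finset.mem_filter, Finset.mem_product, Finset.mem_univ, Finset.mem_range,
          true_and]
        refine ⟨?_, hi.1, ?_⟩
        · have := hx0 i; omega
        · exact_mod_cast (Int.toNat_of_nonneg (hx0 i)).symm
      · intro a _ b _ hab
        simpa using congrArg Prod.fst hab
    have hS2 : S2.card ≤ (Finset.filter
        (fun a : Fin d × ℕ => r13 n d ≤ (a.1 : ℕ) ∧ ((x a.1 : ℝ) = (a.2 : ℝ)))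
        (Finset.univ ×ˢ Finset.range (q13 n d))).card := by
      apply Finset.card_le_card_of_injOn (fun i => (i, (x i).toNat))
      · intro i hi
        simp only [hS2def, Finset.mem_filter, Finset.mem_univ, true_and, Finset.mem_coe] at hi
        simp only [Finset.mem_coe, Finset.mem_filter, Finset.mem_product, Finset.mem_univ, Finset.mem_range,
          true_and]
        refine ⟨?_, hi.1, ?_⟩
        · have := hx0 i; omega
        · exact_mod_cast (Int.toNat_of_nonneg (hx0 i)).symm
      · intro a _ b _ hab
        simpa using congrArg Prod.fst hab
    have hdisj : Disjoint S1 S2 := by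
      rw [Finset.disjoint_left]
      intro i h1 h2
      simp only [hS1def, hS2def, Finset.mem_filter] at h1 h2
      omega
    by_cases h2 : 2 ≤ S1.card + S2.card
    · omega
    · push_neg at h2
      -- at most one coordinate hyperplane hits; get sum lower bound
      set t : Fin d → ℤ := fun i => if (i : ℕ) < r13 n d then (q13 n d : ℤ) + 1 else q13 n d
        with htdef
      have ht_sum : ∑ i, t i = (d : ℤ) * q13 n d + r13 n d := by
        have h1 : ∀ i : Fin d, t i = (q13 n d : ℤ) + (if (i : ℕ) < r13 n d then 1 else 0) := by
          intro i; by_cases hir : (i : ℕ) < r13 n d <;> simp [htdef, hir]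
        rw [Finset.sum_congr rfl (fun i _ => h1 i), Finset.sum_add_distrib,
          Finset.sum_const, Finset.sum_boole, Finset.card_univ, Fintype.card_fin]
        have := aux13_card_filter_lt d (r13 n d) hr
        rw [this]
        ring
      have hmiss : ∀ i : Fin d, i ∉ S1 ∪ S2 → t i ≤ x i := by
        intro i hi
        simp only [Finset.mem_union, hS1def, hS2def, Finset.mem_filter, Finset.mem_univ,
          true_and, not_or] at hi
        simp only [htdef]
        split_ifs with hir <;> omega
      have hsub : ∑ i ∈ Finset.univ \ (S1 ∪ S2), t i ≤ ∑ i, x i := by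
        calc ∑ i ∈ Finset.univ \ (S1 ∪ S2), t i
            ≤ ∑ i ∈ Finset.univ \ (S1 ∪ S2), x i :=
              Finset.sum_le_sum (fun i hi => hmiss i (Finset.mem_sdiff.mp hi).2)
          _ ≤ ∑ i, x i :=
              Finset.sum_le_sum_of_subset_of_nonneg (Finset.sdiff_subset)
                (fun i _ _ => hx0 i)
      have hsdiff : ∑ i ∈ Finset.univ \ (S1 ∪ S2), t i
          = ∑ i, t i - ∑ i ∈ S1 ∪ S2, t i := by
        rw [eq_sub_iff_add_eq, Finset.sum_sdiff (Finset.subset_univ _)]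
      have hcardU : (S1 ∪ S2).card = S1.card + S2.card :=
        Finset.card_union_of_disjoint hdisj
      -- key cast of arithmetic facts to ℤ
      have hqrZ : ((d : ℤ) + 1) * q13 n d + r13 n d = n + c := by exact_mod_cast hqr
      have hcqZ : (q13 n d : ℤ) ≤ c := by exact_mod_cast hcq
      have hexpZ : ((d : ℤ) + 1) * q13 n d = (d : ℤ) * q13 n d + q13 n d := by ring
      rcases Nat.eq_zero_or_pos (S1 ∪ S2).card with hU0 | hU1
      · -- no coordinate hyperplane hits: impossible
        exfalso
        have hUe : S1 ∪ S2 = ∅ := Finset.card_eq_zero.mp hU0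
        rw [hsdiff, hUe, Finset.sum_empty, sub_zero, ht_sum] at hsub
        linarith
      · -- exactly one coordinate hyperplane hits
        have hU1' : (S1 ∪ S2).card = 1 := by omega
        obtain ⟨i0, hi0⟩ := Finset.card_eq_one.mp hU1'
        rw [hsdiff, hi0, Finset.sum_singleton, ht_sum] at hsub
        -- lower bound on the coordinate sum
        have hsnq : (n : ℤ) - q13 n d ≤ ∑ i, x i := by
          by_cases hi0r : (i0 : ℕ) < r13 n d
          · have h1r : 1 ≤ r13 n d := by omega
            have hc1 : (q13 n d : ℤ) + 1 ≤ c := by exact_mod_cast hrq h1r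
            have ht0 : t i0 = (q13 n d : ℤ) + 1 := by simp [htdef, hi0r]
            rw [ht0] at hsub
            linarith
          · have ht0 : t i0 = (q13 n d : ℤ) := by simp [htdef, hi0r]
            rw [ht0] at hsub
            linarith
        -- the diagonal family contributes one hyperplane
        have hG3 : 1 ≤ (Finset.filter
            (fun j : ℕ => ∑ i, ((x i : ℝ)) = (n : ℝ) - 1 - (j : ℝ))
            (Finset.range (q13 n d))).card := by
          apply Finset.card_pos.mpr
          refine ⟨((n : ℤ) - 1 - ∑ i, x i).toNat, ?_⟩
          simp only [Finset.mem_filter, Finset.mem_range]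
          constructor
          · omega
          · have hnn : (0 : ℤ) ≤ (n : ℤ) - 1 - ∑ i, x i := by omega
            have hcast : ((((n : ℤ) - 1 - ∑ i, x i).toNat : ℤ) : ℝ)
                = (((n : ℤ) - 1 - ∑ i, x i : ℤ) : ℝ) := by
              exact_mod_cast congrArg (fun z : ℤ => (z : ℝ)) (Int.toNat_of_nonneg hnn)
            push_cast at hcast ⊢
            rw [hcast]
            ring
        omega
end

section
/- For every d ≥ 3 and n ≥ 1, the multiset of (d+1)·⌈n/(d−1)⌉ hyperplanes consisting of x_i = j for 1 ≤ i ≤ d and 0 ≤ j ≤ ⌈n/(d−1)⌉−1, together with x_1+⋯+x_d = n−1−j for 0 ≤ j ≤ ⌈n/(d−1)⌉−1, covers every point of T_d(n) at least three times. In particular, f(n,d,3) ≤ (1 + 2/(d−1))n + O_d(1). -/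
open scoped Classical

/-- `⌈n/(d-1)⌉`. -/
def m14 (n d : ℕ) : ℕ := (n + d - 2) / (d - 1)

/-- The explicit 3-cover: hyperplanes `x_i = j` for `1 ≤ i ≤ d`, `0 ≤ j ≤ ⌈n/(d-1)⌉ - 1`,
together with `x_1 + ⋯ + x_d = n - 1 - j` for `0 ≤ j ≤ ⌈n/(d-1)⌉ - 1`. -/
noncomputable def cover14 (n d : ℕ) : Multiset ((Fin d → ℝ) × ℝ) :=
  ((Finset.univ : Finset (Fin d)) ×ˢ Finset.range (m14 n d)).val.map
    (fun ij => (Pi.single ij.1 (1 : ℝ), (ij.2 : ℝ))) +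
  (Finset.range (m14 n d)).val.map
    (fun j => ((fun _ => (1 : ℝ)), (n : ℝ) - 1 - (j : ℝ)))

theorem stmt14 (d n : ℕ) (hd : 3 ≤ d) (hn : 1 ≤ n) :
    Multiset.card (cover14 n d) = (d + 1) * m14 n d ∧
    (∀ x ∈ TriGrid d n, 3 ≤ hypCount d (cover14 n d) (toReal x)) := by
  -- arithmetic key fact: n ≤ m * (d - 1)
  have hmn : n ≤ m14 n d * (d - 1) := by
    have h1 := Nat.div_add_mod (n + d - 2) (d - 1)
    have h2 : (n + d - 2) % (d - 1) < d - 1 := Nat.mod_lt _ (by omega)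
    rw [mul_comm]
    unfold m14
    generalize (d - 1) * ((n + d - 2) / (d - 1)) = a at h1 ⊢
    generalize (n + d - 2) % (d - 1) = r at h1 h2
    omega
  constructor
  · simp [cover14]
    ring
  · intro x hx
    obtain ⟨hx0, hxs⟩ := hx
    have hsum : ∀ i : Fin d, ∑ k, (Pi.single i (1 : ℝ) : Fin d → ℝ) k * toReal x k
        = (x i : ℝ) := by
      intro i
      simp [toReal, Pi.single_apply, ite_mul]
    set S := Finset.univ.filter (fun i : Fin d => x i < (m14 n d : ℤ)) with hS
    -- lower bound on the integer sum via coordinates not in S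
    have hcompl : (Finset.univ \ S).card = d - S.card := by
      rw [Finset.card_sdiff_of_subset (Finset.subset_univ S)]
      simp
    have hXlb : ((d - S.card : ℕ) : ℤ) * (m14 n d : ℤ) ≤ ∑ i, x i := by
      calc ((d - S.card : ℕ) : ℤ) * (m14 n d : ℤ)
          = ∑ _i ∈ Finset.univ \ S, (m14 n d : ℤ) := by
            rw [Finset.sum_const, hcompl]; ring
        _ ≤ ∑ i ∈ Finset.univ \ S, x i := by
            apply Finset.sum_le_sum
            intro i hi
            simp only [hS, Finset.mem_sdiff, Finset.mem_filter, Finset.mem_univ, true_and,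
              not_lt] at hi
            exact hi
        _ ≤ ∑ i, x i := by
            apply Finset.sum_le_sum_of_subset_of_nonneg (Finset.sdiff_subset)
            intro i _ _
            exact hx0 i
    have hnmZ : (n : ℤ) ≤ ((d - 1 : ℕ) : ℤ) * (m14 n d : ℤ) := by
      have : (n : ℤ) ≤ ((m14 n d * (d - 1) : ℕ) : ℤ) := by exact_mod_cast hmn
      push_cast at this ⊢
      linarith
    have hS2 : 2 ≤ S.card := by
      by_contra h
      push_neg at h
      have hc : d - 1 ≤ d - S.card := by omega
      have hle : ((d - 1 : ℕ) : ℤ) * (m14 n d : ℤ) ≤ ∑ i, x i :=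
        le_trans (mul_le_mul_of_nonneg_right (by exact_mod_cast hc) (by positivity)) hXlb
      linarith
    -- split the count
    have hcov : cover14 n d =
        ((Finset.univ : Finset (Fin d)) ×ˢ Finset.range (m14 n d)).val.map
          (fun ij : Fin d × ℕ => (Pi.single ij.1 (1 : ℝ), (ij.2 : ℝ))) +
        (Finset.range (m14 n d)).val.map
          (fun j : ℕ => (((fun _ => (1 : ℝ)) : Fin d → ℝ), (n : ℝ) - 1 - ((j : ℕ) : ℝ))) := by
      unfold cover14
      congr 1
      change Multiset.map _ (Multiset.bind _ fun a => {((a : ℕ) : ℝ)}) = _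
      simp only [Multiset.bind_singleton, Multiset.map_map]
      rfl
    unfold hypCount
    rw [hcov, Multiset.countP_add, Multiset.countP_map]
    set p : ((Fin d → ℝ) × ℝ) → Prop := fun H => ∑ i, H.1 i * toReal x i = H.2 with hp
    -- first part : at least S.card hyperplanes of the form x_i = j
    have h1 : S.card ≤ Multiset.card
        (Multiset.filter
          (fun a : Fin d × ℕ => p (Pi.single a.1 (1 : ℝ), (a.2 : ℝ)))
          ((Finset.univ : Finset (Fin d)) ×ˢ Finset.range (m14 n d)).val) := by
      rw [← Finset.filter_val]
      show S.card ≤ (Finset.filter _ _).card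
      apply Finset.card_le_card_of_injOn (fun i => (i, (x i).toNat))
      · intro i hi
        simp only [Finset.mem_coe, hS, Finset.mem_filter, Finset.mem_univ, true_and] at hi
        have h0i : (0 : ℤ) ≤ x i := hx0 i
        simp only [Finset.mem_coe, Finset.mem_filter, Finset.mem_product, Finset.mem_univ, true_and,
          Finset.mem_range]
        refine ⟨(by omega : ((x i).toNat) < m14 n d), ?_⟩
        show ∑ k, (Pi.single i (1 : ℝ) : Fin d → ℝ) k * toReal x k = (((x i).toNat : ℕ) : ℝ)
        rw [hsum i]
        have htn : ((x i).toNat : ℤ) = x i := Int.toNat_of_nonneg h0i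
        exact_mod_cast congrArg (fun z : ℤ => (z : ℝ)) htn.symm
      · intro a _ b _ hab
        exact (Prod.mk.injEq _ _ _ _ ▸ hab).1
    rcases Nat.lt_or_ge S.card 3 with h3 | h3
    · -- S.card = 2 : the sum hyperplane also covers
      have hScard : S.card = 2 := by omega
      have hXlb2 : (n : ℤ) - (m14 n d : ℤ) ≤ ∑ i, x i := by
        have hc : ((d - 2 : ℕ) : ℤ) * (m14 n d : ℤ) ≤ ∑ i, x i := by
          refine le_trans (mul_le_mul_of_nonneg_right ?_ (by positivity)) hXlb
          exact_mod_cast (by omega : d - 2 ≤ d - S.card)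
        have hcast : ((d - 2 : ℕ) : ℤ) = ((d - 1 : ℕ) : ℤ) - 1 := by
          omega
        rw [hcast] at hc
        nlinarith [hnmZ, hc]
      -- second part: the hyperplane  ∑ x = n - 1 - j0  with  j0 = n - 1 - ∑ x
      have hge : (0 : ℤ) ≤ (n : ℤ) - 1 - ∑ i, x i := by omega
      set j0 : ℕ := ((n : ℤ) - 1 - ∑ i, x i).toNat with hj0
      have htn : ((j0 : ℕ) : ℤ) = (n : ℤ) - 1 - ∑ i, x i := Int.toNat_of_nonneg hge
      have hj0m : j0 < m14 n d := by omega
      have h2 : 1 ≤ Multiset.countP p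
          ((((Finset.range (m14 n d)).val : Multiset ℕ).map
            (fun j : ℕ => (((fun _ => (1 : ℝ)) : Fin d → ℝ), (n : ℝ) - 1 - (j : ℝ))))) := by
        apply Nat.succ_le_of_lt
        apply Multiset.countP_pos.mpr
        refine ⟨(((fun _ => (1 : ℝ)) : Fin d → ℝ), (n : ℝ) - 1 - (j0 : ℝ)), ?_, ?_⟩
        · exact Multiset.mem_map.mpr ⟨j0, by simpa using hj0m, rfl⟩
        · show ∑ i, (1 : ℝ) * toReal x i = (n : ℝ) - 1 - (j0 : ℝ)
          simp only [one_mul, toReal]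
          have hR : ((j0 : ℕ) : ℝ) = (n : ℝ) - 1 - ∑ i, ((x i : ℤ) : ℝ) := by
            have h := congrArg (fun z : ℤ => (z : ℝ)) htn
            push_cast at h
            simpa using h
          linarith [hR]
      calc 3 = 2 + 1 := rfl
        _ ≤ _ + _ := Nat.add_le_add (le_trans (by omega) h1) (le_trans h2 (le_refl _))
    · -- S.card ≥ 3
      calc 3 ≤ S.card := h3
        _ ≤ _ := le_trans h1 (Nat.le_add_right _ _)
end

section
/- For every d ≥ 1, the minimum total weight of a fractional hyperplane cover of T_d(2) equals 1 + 1/d. -/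
open scoped Classical

/-- The coordinate hyperplane `x_i = 0`. -/
def Hi (d : ℕ) (i : Fin d) : (Fin d → ℝ) × ℝ := (fun j => if j = i then 1 else 0, 0)

/-- The hyperplane `∑ x_i = 1`. -/
def Hones (d : ℕ) : (Fin d → ℝ) × ℝ := (fun _ => 1, 1)

/-- The optimal fractional cover. -/
noncomputable def wopt (d : ℕ) : ((Fin d → ℝ) × ℝ) →₀ ℝ :=
  (∑ i : Fin d, Finsupp.single (Hi d i) (1 / (d : ℝ))) + Finsupp.single (Hones d) (1 / (d : ℝ))

lemma finsetsum_finsupp_sum {α : Type*} {ι : Type*} (s : Finset ι) (g : ι → (α →₀ ℝ))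
    (h : α → ℝ → ℝ) (h0 : ∀ a, h a 0 = 0)
    (hadd : ∀ a b₁ b₂, h a (b₁ + b₂) = h a b₁ + h a b₂) :
    (∑ i ∈ s, g i).sum h = ∑ i ∈ s, (g i).sum h := by
  induction s using Finset.cons_induction with
  | empty => simp [Finsupp.sum_zero_index]
  | cons a s ha ih =>
      rw [Finset.sum_cons, Finsupp.sum_add_index' h0 hadd, ih, Finset.sum_cons]

lemma wopt_sum (d : ℕ) (h : ((Fin d → ℝ) × ℝ) → ℝ → ℝ)
    (h0 : ∀ a, h a 0 = 0) (hadd : ∀ a b₁ b₂, h a (b₁ + b₂) = h a b₁ + h a b₂) :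
    (wopt d).sum h = (∑ i : Fin d, h (Hi d i) (1 / (d : ℝ))) + h (Hones d) (1 / (d : ℝ)) := by
  rw [wopt, Finsupp.sum_add_index' h0 hadd, finsetsum_finsupp_sum _ _ h h0 hadd,
    Finsupp.sum_single_index (h0 _)]
  congr 1
  exact Finset.sum_congr rfl fun i _ => Finsupp.sum_single_index (h0 _)

lemma fracTotal_sum {d : ℕ} (w : ((Fin d → ℝ) × ℝ) →₀ ℝ) :
    fracTotal w = w.sum fun _ v => v := rfl

lemma fracAt_sum {d : ℕ} (w : ((Fin d → ℝ) × ℝ) →₀ ℝ) (p : Fin d → ℝ) :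
    fracAt w p = w.sum fun H v => if ∑ i, H.1 i * p i = H.2 then v else 0 := by
  rw [fracAt, Finsupp.sum, Finset.sum_filter]

lemma wopt_apply (d : ℕ) (H : (Fin d → ℝ) × ℝ) :
    wopt d H = (∑ i : Fin d, if Hi d i = H then 1 / (d : ℝ) else 0) +
      (if Hones d = H then 1 / (d : ℝ) else 0) := by
  rw [wopt, Finsupp.add_apply, Finsupp.finset_sum_apply, Finsupp.single_apply]
  congr 1
  exact Finset.sum_congr rfl fun i _ => Finsupp.single_apply

lemma wopt_nonneg (d : ℕ) (H : (Fin d → ℝ) × ℝ) : 0 ≤ wopt d H := by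
  rw [wopt_apply]
  have hd0 : (0 : ℝ) ≤ 1 / (d : ℝ) := by positivity
  refine add_nonneg (Finset.sum_nonneg fun i _ => ?_) ?_ <;> split <;> simp [hd0]

lemma wopt_support (d : ℕ) (hd : 1 ≤ d) (H : (Fin d → ℝ) × ℝ) (hH : wopt d H ≠ 0) :
    H.1 ≠ 0 := by
  intro h1
  apply hH
  rw [wopt_apply]
  have z : ∀ i : Fin d, Hi d i ≠ H := by
    intro i hi
    have : (Hi d i).1 i = H.1 i := by rw [hi]
    simp [Hi, h1] at this
  have z2 : Hones d ≠ H := by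
    intro hh
    have : (Hones d).1 ⟨0, hd⟩ = H.1 ⟨0, hd⟩ := by rw [hh]
    simp [Hones, h1] at this
  simp [z, z2]

/-- classification of points of `T_d(2)` -/
lemma grid_cases {d : ℕ} (x : Fin d → ℤ) (hx : x ∈ TriGrid d 2) :
    (∀ i, x i = 0) ∨ ∃ j, x j = 1 ∧ ∀ i, i ≠ j → x i = 0 := by
  obtain ⟨h0, hs⟩ := hx
  have hs1 : (∑ i, x i) ≤ 1 := by norm_num at hs; exact hs
  by_cases h : ∀ i, x i = 0
  · exact Or.inl h
  · push_neg at h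
    obtain ⟨j, hj⟩ := h
    have hj1 : 1 ≤ x j := lt_of_le_of_ne (h0 j) (Ne.symm hj)
    have hrest : ∀ i, i ≠ j → x i = 0 := by
      intro i hij
      have h1 : x j + ∑ k ∈ Finset.univ.erase j, x k = ∑ k, x k :=
        Finset.add_sum_erase _ _ (Finset.mem_univ j)
      have h2 : x i ≤ ∑ k ∈ Finset.univ.erase j, x k :=
        Finset.single_le_sum (fun k _ => h0 k) (by simp [hij])
      have : x i ≤ 0 := by omega
      exact le_antisymm this (h0 i)
    refine Or.inr ⟨j, ?_, hrest⟩
    have h1 : x j + ∑ k ∈ Finset.univ.erase j, x k = ∑ k, x k :=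
      Finset.add_sum_erase _ _ (Finset.mem_univ j)
    have h2 : ∑ k ∈ Finset.univ.erase j, x k = 0 :=
      Finset.sum_eq_zero fun k hk => hrest k (Finset.mem_erase.1 hk).1
    omega

lemma wopt_cover (d : ℕ) (hd : 1 ≤ d) : ∀ x ∈ TriGrid d 2, 1 ≤ fracAt (wopt d) (toReal x) := by
  intro x hx
  have hd0 : (d : ℝ) ≠ 0 := Nat.cast_ne_zero.2 (by omega)
  rw [fracAt_sum, wopt_sum d _ (fun a => by split <;> rfl) (fun a b c => by split <;> simp)]
  rcases grid_cases x hx with h | ⟨j, hj1, hj0⟩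
  · have hp : ∀ k, toReal x k = 0 := fun k => by simp [toReal, h k]
    have e1 : ∀ i : Fin d, (∑ k, (Hi d i).1 k * toReal x k) = 0 := by
      intro i; apply Finset.sum_eq_zero; intro k _; rw [hp k, mul_zero]
    have e2 : (∑ k, (Hones d).1 k * toReal x k) = 0 := by
      apply Finset.sum_eq_zero; intro k _; rw [hp k, mul_zero]
    have e3 : ∀ i : Fin d,
        (if (∑ k, (Hi d i).1 k * toReal x k) = (Hi d i).2 then 1/(d:ℝ) else 0) = 1/(d:ℝ) := by
      intro i; rw [e1 i]; simp [Hi]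
    rw [Finset.sum_congr rfl fun i _ => e3 i, if_neg (by rw [e2]; simp [Hones])]
    rw [Finset.sum_const, Finset.card_univ, Fintype.card_fin, nsmul_eq_mul]
    rw [mul_one_div, div_self hd0]
    norm_num
  · have hp : ∀ k, toReal x k = if k = j then (1:ℝ) else 0 := by
      intro k
      by_cases hk : k = j
      · simp [toReal, hk, hj1]
      · simp [toReal, hk, hj0 k hk]
    have e1 : ∀ i : Fin d, (∑ k, (Hi d i).1 k * toReal x k) = if i = j then (1:ℝ) else 0 := by
      intro i
      have : ∀ k : Fin d, (Hi d i).1 k * toReal x k = if k = i then toReal x k else 0 := by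
        intro k; simp only [Hi]; split <;> simp
      rw [Finset.sum_congr rfl fun k _ => this k, Finset.sum_ite_eq' Finset.univ i (toReal x)]
      simp [hp i]
    have e2 : (∑ k, (Hones d).1 k * toReal x k) = 1 := by
      simp only [Hones, one_mul]
      rw [Finset.sum_congr rfl fun k _ => hp k, Finset.sum_ite_eq' Finset.univ j (fun _ => (1:ℝ))]
      simp
    have e3 : ∀ i : Fin d,
        (if (∑ k, (Hi d i).1 k * toReal x k) = (Hi d i).2 then 1/(d:ℝ) else 0)
          = if i = j then 0 else 1/(d:ℝ) := by
      intro i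
      rw [e1 i]
      by_cases hij : i = j <;> simp [Hi, hij]
    rw [Finset.sum_congr rfl fun i _ => e3 i, if_pos (by rw [e2]; simp [Hones])]
    have e4 : ∀ i : Fin d, (if i = j then (0:ℝ) else 1/(d:ℝ))
        = 1/(d:ℝ) - (if i = j then 1/(d:ℝ) else 0) := by
      intro i; split <;> ring
    rw [Finset.sum_congr rfl fun i _ => e4 i, Finset.sum_sub_distrib, Finset.sum_const,
      Finset.card_univ, Fintype.card_fin, nsmul_eq_mul,
      Finset.sum_ite_eq' Finset.univ j (fun _ => 1/(d:ℝ)), if_pos (Finset.mem_univ j),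
      mul_one_div, div_self hd0]
    norm_num

lemma wopt_total (d : ℕ) (hd : 1 ≤ d) : fracTotal (wopt d) = 1 + 1 / (d : ℝ) := by
  have hd0 : (d : ℝ) ≠ 0 := Nat.cast_ne_zero.2 (by omega)
  rw [fracTotal_sum, wopt_sum d _ (fun a => rfl) (fun a b c => rfl)]
  rw [Finset.sum_const, Finset.card_univ, Fintype.card_fin, nsmul_eq_mul, mul_one_div,
    div_self hd0]

/-- the integer basis vector -/
def eZ (d : ℕ) (i : Fin d) : Fin d → ℤ := fun j => if j = i then 1 else 0

lemma eZ_inj (d : ℕ) : Function.Injective (eZ d) := by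
  intro i i' h
  by_contra hne
  have := congrFun h i
  simp [eZ, hne] at this

theorem stmt16 (d : ℕ) (hd : 1 ≤ d) :
    (∃ w : ((Fin d → ℝ) × ℝ) →₀ ℝ,
      IsFracCover d 2 w ∧ fracTotal w = 1 + 1 / (d : ℝ)) ∧
    (∀ w : ((Fin d → ℝ) × ℝ) →₀ ℝ,
      IsFracCover d 2 w → 1 + 1 / (d : ℝ) ≤ fracTotal w) := by
  have hd0 : (d : ℝ) ≠ 0 := Nat.cast_ne_zero.2 (by omega)
  have hdpos : (0:ℝ) < d := by positivity
  constructor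
  · exact ⟨wopt d, ⟨wopt_nonneg d, fun H hH => wopt_support d hd H (Finsupp.mem_support_iff.1 hH),
      wopt_cover d hd⟩, wopt_total d hd⟩
  · intro w hw
    obtain ⟨hw0, hwne, hwcov⟩ := hw
    set S : Finset (Fin d → ℤ) := insert 0 (Finset.image (eZ d) Finset.univ) with hS
    have hz_not : (0 : Fin d → ℤ) ∉ Finset.image (eZ d) Finset.univ := by
      intro hmem
      obtain ⟨i, -, hi⟩ := Finset.mem_image.1 hmem
      have := congrFun hi i
      simp [eZ] at this
    have hScard : S.card = d + 1 := by
      rw [hS, Finset.card_insert_of_notMem hz_not,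
        Finset.card_image_of_injective _ (eZ_inj d), Finset.card_univ, Fintype.card_fin]
    have hSgrid : ∀ x ∈ S, x ∈ TriGrid d 2 := by
      intro x hx
      rw [hS, Finset.mem_insert] at hx
      rcases hx with rfl | hx
      · exact ⟨fun i => le_refl 0, by norm_num⟩
      · obtain ⟨i, _, rfl⟩ := Finset.mem_image.1 hx
        refine ⟨fun j => by simp only [eZ]; split <;> norm_num, ?_⟩
        have : ∑ j, eZ d i j = 1 := by
          simp only [eZ]
          rw [Finset.sum_ite_eq' Finset.univ i (fun _ => (1:ℤ)), if_pos (Finset.mem_univ i)]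
        rw [this]; norm_num
    -- card of points of S on a genuine hyperplane is at most d
    have hcard : ∀ H ∈ w.support,
        ((S.filter (fun x => ∑ i, H.1 i * toReal x i = H.2)).card : ℝ) ≤ d := by
      intro H hH
      have hH1 : H.1 ≠ 0 := hwne H hH
      by_contra hcon
      push_neg at hcon
      have hle : (S.filter (fun x => ∑ i, H.1 i * toReal x i = H.2)) ⊆ S := Finset.filter_subset _ _
      have hcardle : (S.filter (fun x => ∑ i, H.1 i * toReal x i = H.2)).card ≤ d + 1 := by
        rw [← hScard]; exact Finset.card_le_card hle
      have hge : d + 1 ≤ (S.filter (fun x => ∑ i, H.1 i * toReal x i = H.2)).card := by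
        by_contra hc
        push_neg at hc
        have : ((S.filter (fun x => ∑ i, H.1 i * toReal x i = H.2)).card : ℝ) ≤ d := by
          have : (S.filter (fun x => ∑ i, H.1 i * toReal x i = H.2)).card ≤ d := by omega
          exact_mod_cast this
        exact absurd this (not_le.2 hcon)
      have heq : (S.filter (fun x => ∑ i, H.1 i * toReal x i = H.2)) = S :=
        Finset.eq_of_subset_of_card_le hle (by omega)
      have hall : ∀ x ∈ S, ∑ i, H.1 i * toReal x i = H.2 := by
        intro x hx
        rw [← heq] at hx
        exact (Finset.mem_filter.1 hx).2
      have h0S : (0 : Fin d → ℤ) ∈ S := Finset.mem_insert_self _ _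
      have hb : H.2 = 0 := by
        have := hall 0 h0S
        simpa [toReal] using this.symm
      apply hH1
      funext j
      have hjS : eZ d j ∈ S := by
        rw [hS]; exact Finset.mem_insert_of_mem (Finset.mem_image_of_mem _ (Finset.mem_univ j))
      have := hall (eZ d j) hjS
      have hsum : ∑ i, H.1 i * toReal (eZ d j) i = H.1 j := by
        have : ∀ i : Fin d, H.1 i * toReal (eZ d j) i = if i = j then H.1 i else 0 := by
          intro i
          simp only [toReal, eZ]
          split <;> simp
        rw [Finset.sum_congr rfl fun i _ => this i, Finset.sum_ite_eq' Finset.univ j H.1,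
          if_pos (Finset.mem_univ j)]
      rw [hsum, hb] at this
      exact this
    -- double counting
    have hswap : ∑ x ∈ S, fracAt w (toReal x)
        = ∑ H ∈ w.support, w H * ((S.filter (fun x => ∑ i, H.1 i * toReal x i = H.2)).card) := by
      have e1 : ∀ x ∈ S, fracAt w (toReal x)
          = ∑ H ∈ w.support, if ∑ i, H.1 i * toReal x i = H.2 then w H else 0 := by
        intro x _
        rw [fracAt, Finset.sum_filter]
      rw [Finset.sum_congr rfl e1, Finset.sum_comm]
      apply Finset.sum_congr rfl
      intro H _
      rw [← Finset.sum_filter, Finset.sum_const, nsmul_eq_mul, mul_comm]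
    have hlower : ((d : ℝ) + 1) ≤ ∑ x ∈ S, fracAt w (toReal x) := by
      have : ∀ x ∈ S, (1:ℝ) ≤ fracAt w (toReal x) := fun x hx => hwcov x (hSgrid x hx)
      calc ((d : ℝ) + 1) = S.card • (1:ℝ) := by rw [hScard]; push_cast; ring
        _ ≤ ∑ x ∈ S, fracAt w (toReal x) := Finset.card_nsmul_le_sum S _ 1 this
    have hupper : ∑ H ∈ w.support, w H * ((S.filter
          (fun x => ∑ i, H.1 i * toReal x i = H.2)).card : ℝ)
        ≤ (d : ℝ) * fracTotal w := by
      rw [fracTotal, Finset.mul_sum]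
      apply Finset.sum_le_sum
      intro H hH
      rw [mul_comm (d:ℝ) (w H)]
      exact mul_le_mul_of_nonneg_left (hcard H hH) (hw0 H)
    have key : ((d : ℝ) + 1) ≤ (d : ℝ) * fracTotal w := by
      calc ((d : ℝ) + 1) ≤ ∑ x ∈ S, fracAt w (toReal x) := hlower
        _ = _ := hswap
        _ ≤ (d : ℝ) * fracTotal w := hupper
    have h1 : 1 + 1/(d:ℝ) = ((d:ℝ)+1)/(d:ℝ) := by field_simp
    rw [h1, div_le_iff₀ hdpos]
    nlinarith [key]
end

section
/- The minimum total weight of a fractional plane cover of T_3(3) is at most 11/6. Specifically, assigning weight 1/3 to each of the planes x_1 = 0, x_2 = 0, x_3 = 0, x_1+x_2+x_3 = 2, and weight 1/6 to each of x_1+x_2 = 1, x_1+x_3 = 1, x_2+x_3 = 1 gives a fractional cover of total weight 11/6. -/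
open scoped Classical

noncomputable def Wcov : ((Fin 3 → ℝ) × ℝ) →₀ ℝ :=
  Finsupp.single (![1,0,0], (0:ℝ)) (1/3) + Finsupp.single (![0,1,0], (0:ℝ)) (1/3) +
  Finsupp.single (![0,0,1], (0:ℝ)) (1/3) + Finsupp.single (![1,1,1], (2:ℝ)) (1/3) +
  Finsupp.single (![1,1,0], (1:ℝ)) (1/6) + Finsupp.single (![1,0,1], (1:ℝ)) (1/6) +
  Finsupp.single (![0,1,1], (1:ℝ)) (1/6)

lemma Wcov_sum_ind (p : Fin 3 → ℝ) :
    Wcov.sum (fun H v => if ∑ i, H.1 i * p i = H.2 then v else 0)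
    = (if p 0 = 0 then (1/3:ℝ) else 0) + (if p 1 = 0 then (1/3:ℝ) else 0)
      + (if p 2 = 0 then (1/3:ℝ) else 0) + (if p 0 + p 1 + p 2 = 2 then (1/3:ℝ) else 0)
      + (if p 0 + p 1 = 1 then (1/6:ℝ) else 0) + (if p 0 + p 2 = 1 then (1/6:ℝ) else 0)
      + (if p 1 + p 2 = 1 then (1/6:ℝ) else 0) := by
  unfold Wcov
  rw [Finsupp.sum_add_index', Finsupp.sum_add_index', Finsupp.sum_add_index',
    Finsupp.sum_add_index', Finsupp.sum_add_index', Finsupp.sum_add_index']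
  · rw [Finsupp.sum_single_index, Finsupp.sum_single_index, Finsupp.sum_single_index,
      Finsupp.sum_single_index, Finsupp.sum_single_index, Finsupp.sum_single_index,
      Finsupp.sum_single_index]
    · simp [Fin.sum_univ_three]
    all_goals simp
  all_goals intros; try simp
  all_goals split_ifs <;> simp

lemma Wcov_fracAt (p : Fin 3 → ℝ) :
    fracAt Wcov p
    = (if p 0 = 0 then (1/3:ℝ) else 0) + (if p 1 = 0 then (1/3:ℝ) else 0)
      + (if p 2 = 0 then (1/3:ℝ) else 0) + (if p 0 + p 1 + p 2 = 2 then (1/3:ℝ) else 0)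
      + (if p 0 + p 1 = 1 then (1/6:ℝ) else 0) + (if p 0 + p 2 = 1 then (1/6:ℝ) else 0)
      + (if p 1 + p 2 = 1 then (1/6:ℝ) else 0) := by
  rw [← Wcov_sum_ind p, fracAt, Finsupp.sum, Finset.sum_filter]

lemma Wcov_nonneg : ∀ H, 0 ≤ Wcov H := by
  intro H
  simp only [Wcov, Finsupp.add_apply, Finsupp.single_apply]
  split_ifs <;> norm_num

lemma Wcov_total : fracTotal Wcov = 11/6 := by
  have : fracTotal Wcov = Wcov.sum (fun _ v => v) := by
    rw [fracTotal, Finsupp.sum]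
  rw [this]
  unfold Wcov
  rw [Finsupp.sum_add_index', Finsupp.sum_add_index', Finsupp.sum_add_index',
    Finsupp.sum_add_index', Finsupp.sum_add_index', Finsupp.sum_add_index']
  · simp [Finsupp.sum_single_index]
    norm_num
  all_goals intros <;> simp

lemma Wcov_ne : ∀ H ∈ Wcov.support, H.1 ≠ 0 := by
  intro H hH h1
  rw [Finsupp.mem_support_iff] at hH
  apply hH
  simp only [Wcov, Finsupp.add_apply, Finsupp.single_apply]
  have k1 : (![(1:ℝ),0,0], (0:ℝ)) ≠ H := by rintro rfl; simpa using congrFun h1 0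
  have k2 : (![(0:ℝ),1,0], (0:ℝ)) ≠ H := by rintro rfl; simpa using congrFun h1 1
  have k3 : (![(0:ℝ),0,1], (0:ℝ)) ≠ H := by rintro rfl; simpa using congrFun h1 2
  have k4 : (![(1:ℝ),1,1], (2:ℝ)) ≠ H := by rintro rfl; simpa using congrFun h1 0
  have k5 : (![(1:ℝ),1,0], (1:ℝ)) ≠ H := by rintro rfl; simpa using congrFun h1 0
  have k6 : (![(1:ℝ),0,1], (1:ℝ)) ≠ H := by rintro rfl; simpa using congrFun h1 0
  have k7 : (![(0:ℝ),1,1], (1:ℝ)) ≠ H := by rintro rfl; simpa using congrFun h1 1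
  rw [if_neg k1, if_neg k2, if_neg k3, if_neg k4, if_neg k5, if_neg k6, if_neg k7]
  norm_num

lemma cover_claim : ∀ x ∈ TriGrid 3 3,
      1 ≤ (if x 0 = 0 then (1 / 3 : ℝ) else 0) + (if x 1 = 0 then (1 / 3 : ℝ) else 0) +
          (if x 2 = 0 then (1 / 3 : ℝ) else 0) +
          (if x 0 + x 1 + x 2 = 2 then (1 / 3 : ℝ) else 0) +
          (if x 0 + x 1 = 1 then (1 / 6 : ℝ) else 0) +
          (if x 0 + x 2 = 1 then (1 / 6 : ℝ) else 0) +
          (if x 1 + x 2 = 1 then (1 / 6 : ℝ) else 0) := by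
  rintro x ⟨hpos, hsum⟩
  rw [Fin.sum_univ_three] at hsum
  have h0 := hpos 0; have h1 := hpos 1; have h2 := hpos 2
  norm_num at hsum
  have hA : x 0 ≤ 2 := by omega
  have hB : x 1 ≤ 2 := by omega
  have hC : x 2 ≤ 2 := by omega
  interval_cases h : (x 0) <;> interval_cases h' : (x 1) <;> interval_cases h'' : (x 2) <;>
    simp_all <;> norm_num

/-- The explicit fractional cover of `T_3(3)`: weight `1/3` on the planes `x₁ = 0`,
`x₂ = 0`, `x₃ = 0`, `x₁+x₂+x₃ = 2`, and weight `1/6` on `x₁+x₂ = 1`, `x₁+x₃ = 1`,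
`x₂+x₃ = 1`; every point of `T_3(3)` lies on planes of total weight at least `1`,
the total weight is `11/6`, and hence `f*(3,3) ≤ 11/6`. -/
theorem stmt17 :
    (∀ x ∈ TriGrid 3 3,
      1 ≤ (if x 0 = 0 then (1 / 3 : ℝ) else 0) + (if x 1 = 0 then (1 / 3 : ℝ) else 0) +
          (if x 2 = 0 then (1 / 3 : ℝ) else 0) +
          (if x 0 + x 1 + x 2 = 2 then (1 / 3 : ℝ) else 0) +
          (if x 0 + x 1 = 1 then (1 / 6 : ℝ) else 0) +
          (if x 0 + x 2 = 1 then (1 / 6 : ℝ) else 0) +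
          (if x 1 + x 2 = 1 then (1 / 6 : ℝ) else 0)) ∧
    4 * (1 / 3 : ℝ) + 3 * (1 / 6) = 11 / 6 ∧
    (∃ w : ((Fin 3 → ℝ) × ℝ) →₀ ℝ,
      IsFracCover 3 3 w ∧ fracTotal w ≤ 11 / 6) := by
  refine ⟨cover_claim, by norm_num, ⟨Wcov, ⟨Wcov_nonneg, Wcov_ne, ?_⟩, le_of_eq Wcov_total⟩⟩
  intro x hx
  rw [Wcov_fracAt]
  have h := cover_claim x hx
  simp only [toReal]
  exact_mod_cast h
end

section
/- Let ℓ be a line in ℝ² that is neither horizontal, nor vertical, nor of slope −1, and suppose ℓ contains at least j+2 points of the triangular grid T_2(3j+2) (j ≥ 1) all of which lie in the union of the 2j+2 rows y ∈ {0,…,2j+1} and 2j+2 columns x ∈ {0,…,2j+1}. Then ℓ has slope 1, and consecutive grid points of ℓ differ by (±1, ±1). -/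
/-- Let `ℓ = {(x, y) | a x + b y = c}` be a line in `ℝ²` that is neither horizontal (`a ≠ 0`),
nor vertical (`b ≠ 0`), nor of slope `-1` (`a ≠ b`). If `ℓ` contains at least `j + 2` points of
the triangular grid `T_2(3j+2)` all lying in the rows and columns `0, …, 2j+1`, then `ℓ` has
slope `1` (i.e. `a = -b`) and any two consecutive integer points of `ℓ` differ by `(1, 1)`. -/
theorem stmt19 (j : ℕ) (hj : 1 ≤ j) (a b c : ℝ)
    (ha : a ≠ 0) (hb : b ≠ 0) (hab : a ≠ b)
    (P : Finset (ℤ × ℤ))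
    (hPcard : (j : ℕ) + 2 ≤ P.card)
    (hP : ∀ p ∈ P, 0 ≤ p.1 ∧ 0 ≤ p.2 ∧ p.1 + p.2 ≤ 3 * (j : ℤ) + 1 ∧
      p.1 ≤ 2 * (j : ℤ) + 1 ∧ p.2 ≤ 2 * (j : ℤ) + 1 ∧
      a * (p.1 : ℝ) + b * (p.2 : ℝ) = c) :
    a = -b ∧
    ∀ p q : ℤ × ℤ,
      a * (p.1 : ℝ) + b * (p.2 : ℝ) = c →
      a * (q.1 : ℝ) + b * (q.2 : ℝ) = c →
      p.1 < q.1 →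
      (∀ r : ℤ × ℤ, a * (r.1 : ℝ) + b * (r.2 : ℝ) = c →
        ¬(p.1 < r.1 ∧ r.1 < q.1)) →
      q.1 - p.1 = 1 ∧ q.2 - p.2 = 1 := by
  -- key linear relation for any two points of P
  have key : ∀ p ∈ P, ∀ q ∈ P,
      a * ((p.1 - q.1 : ℤ) : ℝ) + b * ((p.2 - q.2 : ℤ) : ℝ) = 0 := by
    intro p hp q hq
    have hp' := (hP p hp).2.2.2.2.2
    have hq' := (hP q hq).2.2.2.2.2
    push_cast
    linarith
  -- x-coordinates are injective on P
  have hinjx : ∀ p ∈ P, ∀ q ∈ P, p.1 = q.1 → p = q := by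
    intro p hp q hq h
    have hp' := (hP p hp).2.2.2.2.2
    have hq' := (hP q hq).2.2.2.2.2
    rw [h] at hp'
    have h2 : b * (p.2 : ℝ) = b * (q.2 : ℝ) := by linarith
    have h3 : (p.2 : ℝ) = (q.2 : ℝ) := mul_left_cancel₀ hb h2
    have : p.2 = q.2 := by exact_mod_cast h3
    exact Prod.ext h this
  -- y-coordinates are injective on P
  have hinjy : ∀ p ∈ P, ∀ q ∈ P, p.2 = q.2 → p = q := by
    intro p hp q hq h
    have hp' := (hP p hp).2.2.2.2.2
    have hq' := (hP q hq).2.2.2.2.2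
    rw [h] at hp'
    have h2 : a * (p.1 : ℝ) = a * (q.1 : ℝ) := by linarith
    have h3 : (p.1 : ℝ) = (q.1 : ℝ) := mul_left_cancel₀ ha h2
    have : p.1 = q.1 := by exact_mod_cast h3
    exact Prod.ext this h
  have hcardIcc : (Finset.Icc (0:ℤ) (j:ℤ)).card < P.card := by
    rw [Int.card_Icc]
    omega
  -- pair at horizontal distance 1
  obtain ⟨p₁, hp₁, q₁, hq₁, hne₁, heq₁⟩ :=
    Finset.exists_ne_map_eq_of_card_lt_of_maps_to (f := fun p : ℤ × ℤ => p.1 / 2) hcardIcc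
      (fun p hp => by have h := hP p hp; simp only [Finset.coe_Icc, Set.mem_Icc, Finset.mem_Icc, Finset.mem_coe]; omega)
  have hxne : p₁.1 ≠ q₁.1 := fun h => hne₁ (hinjx p₁ hp₁ q₁ hq₁ h)
  have hx1 : p₁.1 - q₁.1 = 1 ∨ p₁.1 - q₁.1 = -1 := by omega
  -- pair at vertical distance 1
  obtain ⟨p₂, hp₂, q₂, hq₂, hne₂, heq₂⟩ :=
    Finset.exists_ne_map_eq_of_card_lt_of_maps_to (f := fun p : ℤ × ℤ => p.2 / 2) hcardIcc
      (fun p hp => by have h := hP p hp; simp only [Finset.coe_Icc, Set.mem_Icc, Finset.mem_Icc, Finset.mem_coe]; omega)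
  have hyne : p₂.2 ≠ q₂.2 := fun h => hne₂ (hinjy p₂ hp₂ q₂ hq₂ h)
  have hy1 : p₂.2 - q₂.2 = 1 ∨ p₂.2 - q₂.2 = -1 := by omega
  have hyne1 : p₁.2 ≠ q₁.2 := fun h => hne₁ (hinjy p₁ hp₁ q₁ hq₁ h)
  have hxne2 : p₂.1 ≠ q₂.1 := fun h => hne₂ (hinjx p₂ hp₂ q₂ hq₂ h)
  have hk1 := key p₁ hp₁ q₁ hq₁
  have hk2 := key p₂ hp₂ q₂ hq₂
  set v : ℤ := p₁.2 - q₁.2 with hv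
  set u : ℤ := p₂.1 - q₂.1 with hu
  have hvne : v ≠ 0 := sub_ne_zero.mpr hyne1
  have hune : u ≠ 0 := sub_ne_zero.mpr hxne2
  -- |b| ≤ |a|
  have habs1 : |b| ≤ |a| := by
    have hvabs : (1:ℝ) ≤ |(v : ℝ)| := by exact_mod_cast Int.one_le_abs hvne
    have heqa : |a| = |b| * |(v : ℝ)| := by
      rw [← abs_mul, abs_eq_abs]
      rcases hx1 with h | h <;> rw [h] at hk1 <;> push_cast at hk1
      · exact Or.inr (by linarith)
      · exact Or.inl (by linarith)
    nlinarith [abs_nonneg b]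
  -- |a| ≤ |b|
  have habs2 : |a| ≤ |b| := by
    have huabs : (1:ℝ) ≤ |(u : ℝ)| := by exact_mod_cast Int.one_le_abs hune
    have heqb : |b| = |a| * |(u : ℝ)| := by
      rw [← abs_mul, abs_eq_abs]
      rcases hy1 with h | h <;> rw [h] at hk2 <;> push_cast at hk2
      · exact Or.inr (by linarith)
      · exact Or.inl (by linarith)
    nlinarith [abs_nonneg a]
  have hamb : a = -b := by
    rcases abs_eq_abs.mp (le_antisymm habs2 habs1) with h | h
    · exact absurd h hab
    · exact h
  refine ⟨hamb, ?_⟩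
  intro p q hp hq hlt hmin
  have hbna : b = -a := by linarith
  have hpq : p.1 - p.2 = q.1 - q.2 := by
    rw [hbna] at hp hq
    have h1 : a * ((p.1 : ℝ) - (p.2 : ℝ)) = c := by ring_nf; ring_nf at hp; linarith
    have h2 : a * ((q.1 : ℝ) - (q.2 : ℝ)) = c := by ring_nf; ring_nf at hq; linarith
    have h3 : ((p.1 : ℝ) - (p.2 : ℝ)) = ((q.1 : ℝ) - (q.2 : ℝ)) :=
      mul_left_cancel₀ ha (h1.trans h2.symm)
    exact_mod_cast h3
  have hr : a * (((p.1 + 1, p.2 + 1) : ℤ × ℤ).1 : ℝ) +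
      b * (((p.1 + 1, p.2 + 1) : ℤ × ℤ).2 : ℝ) = c := by
    have hexp : a * (((p.1 + 1 : ℤ)) : ℝ) + b * (((p.2 + 1 : ℤ)) : ℝ)
        = a * (p.1 : ℝ) + b * (p.2 : ℝ) + (a + b) := by push_cast; ring
    simpa [hexp] using by
      rw [hbna]; rw [hbna] at hp; linarith
  have hmr := hmin (p.1 + 1, p.2 + 1) hr
  push_neg at hmr
  have hq1 : q.1 = p.1 + 1 := by
    by_contra h
    have : p.1 < p.1 + 1 := by omega
    have := hmr this
    omega
  exact ⟨by omega, by omega⟩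
end
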